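/- arXiv:2510.11054 — 6 statements merged into one kernel-verified Lean document; each statement's English description precedes it below -/
import Mathlib

section
/- Let n be a positive integer, let v_0, v_1, ..., v_n be row vectors of length n over a commutative ring, and let β_1, ..., β_n, γ_1, ..., γ_n be scalars. Then the determinant of the n×n matrix whose i-th row is β_i v_{i-1} + γ_i v_i equals the sum over k = 0, ..., n of (∏_{i=1}^k β_i)(∏_{j=k+1}^n γ_j) times the determinant of the matrix with rows v_0, ..., v_{k-1}, v_{k+1}, ..., v_n. -/
open Finset


/-- **Determinant lemma.**  For `n+1` row vectors `v 0, …, v n` of length `n` over a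
commutative ring and scalars `β 1, …, β n`, `γ 1, …, γ n` (indexed here by `Fin n`),
the determinant of the `n × n` matrix whose `i`-th row is `β i • v (i-1) + γ i • v i`
equals `∑ k, (∏_{i ≤ k} β i) (∏_{j > k} γ j) det (rows v 0, …, v (k-1), v (k+1), …, v n)`. -/
theorem sum_det {R : Type*} [CommRing R] (n : ℕ) (hn : 0 < n)
    (v : Fin (n + 1) → Fin n → R) (β γ : Fin n → R) :
    Matrix.det (Matrix.of fun i j : Fin n => β i * v i.castSucc j + γ i * v i.succ j) =
      ∑ k : Fin (n + 1),
        (∏ i ∈ Finset.univ.filter fun i : Fin n => (i : ℕ) < (k : ℕ), β i) *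
        (∏ j ∈ Finset.univ.filter fun j : Fin n => (k : ℕ) ≤ (j : ℕ), γ j) *
        Matrix.det (Matrix.of fun i j : Fin n => v (k.succAbove i) j) := by
  classical
  set f : AlternatingMap R (Fin n → R) R (Fin n) := Matrix.detRowAlternating with hf
  set S : Fin (n + 1) → Finset (Fin n) :=
    fun k => Finset.univ.filter fun i : Fin n => (i : ℕ) < (k : ℕ) with hS
  -- Step 1: expand by multilinearity
  have h1 : Matrix.det (Matrix.of fun i j : Fin n => β i * v i.castSucc j + γ i * v i.succ j)
      = ∑ s : Finset (Fin n),
          (∏ i, if i ∈ s then β i else γ i) •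
            f (fun i => if i ∈ s then v i.castSucc else v i.succ) := by
    have : Matrix.det (Matrix.of fun i j : Fin n => β i * v i.castSucc j + γ i * v i.succ j)
        = f.toMultilinearMap ((fun i => β i • v i.castSucc) + fun i => γ i • v i.succ) := rfl
    rw [this, MultilinearMap.map_add_univ]
    refine Finset.sum_congr rfl fun s _ => ?_
    have hp : (s.piecewise (fun i => β i • v i.castSucc) fun i => γ i • v i.succ)
        = fun i => (if i ∈ s then β i else γ i) • (if i ∈ s then v i.castSucc else v i.succ) := by
      funext i
      by_cases h : i ∈ s <;> simp [Finset.piecewise, h]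
    rw [hp, MultilinearMap.map_smul_univ]
    rfl
  rw [h1]
  -- Step 2: terms not of the form S k vanish
  have hzero : ∀ s : Finset (Fin n), (∀ k : Fin (n + 1), s ≠ S k) →
      f (fun i => if i ∈ s then v i.castSucc else v i.succ) = 0 := by
    intro s hs
    -- find adjacent violation: a ∉ s, b ∈ s, a+1 = b
    by_cases hadj : ∃ a b : Fin n, (a : ℕ) + 1 = (b : ℕ) ∧ a ∉ s ∧ b ∈ s
    · obtain ⟨a, b, hab, ha, hb⟩ := hadj
      refine f.map_eq_zero_of_eq _ (i := a) (j := b) ?_ ?_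
      · have hsc : a.succ = b.castSucc := Fin.ext (by simp [hab])
        rw [if_neg ha, if_pos hb, hsc]
      · intro h; exact ha (by rw [h]; exact hb)
    · exfalso
      push_neg at hadj
      -- s is downward closed
      have hdc : ∀ a b : Fin n, (a : ℕ) ≤ (b : ℕ) → b ∈ s → a ∈ s := by
        intro a b hab hb
        obtain ⟨m, hm⟩ := Nat.le.dest hab
        induction m generalizing b with
        | zero => have : a = b := Fin.ext (by omega); rwa [this]
        | succ m ih =>
          have hm' : (a : ℕ) + m < n := by omega
          have hcs : (⟨(a : ℕ) + m, hm'⟩ : Fin n) ∈ s := by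
            by_contra hcn
            exact (hadj ⟨(a : ℕ) + m, hm'⟩ b (by show (a : ℕ) + m + 1 = (b : ℕ); omega)
              hcn hb).elim
          exact ih ⟨(a : ℕ) + m, hm'⟩ (by show (a : ℕ) ≤ (a : ℕ) + m; omega) hcs rfl
      -- so s = S (s.card)
      have hcard : s.card ≤ n := le_trans (Finset.card_le_card (Finset.subset_univ s)) (by simp)
      apply hs ⟨s.card, by omega⟩
      ext i
      simp only [hS, Finset.mem_filter, Finset.mem_univ, true_and]
      constructor
      · intro hi
        have hsub : Finset.Iic i ⊆ s := fun j hj => hdc j i (by simpa using hj) hi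
        have := Finset.card_le_card hsub
        rw [Fin.card_Iic] at this
        omega
      · intro hi
        by_contra hns
        have hsub : s ⊆ Finset.Iio i := by
          intro j hj
          simp only [Finset.mem_Iio]
          by_contra hji
          exact hns (hdc i j (Fin.le_def.mp (not_lt.mp hji)) hj)
        have := Finset.card_le_card hsub
        rw [Fin.card_Iio] at this
        omega
  -- Step 3: restrict the sum to the image of S
  have hSinj : Function.Injective S := by
    intro k₁ k₂ h
    by_contra hne
    have key : ∀ a b : Fin (n + 1), a < b → S a ≠ S b := by
      intro a b hab hSab
      have hb : (b : ℕ) ≤ n := by omega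
      have ha : (a : ℕ) < n := by
        have := Fin.lt_def.mp hab; omega
      have : (⟨(a : ℕ), ha⟩ : Fin n) ∈ S b := by
        simp [hS]; exact Fin.lt_def.mp hab
      rw [← hSab] at this
      simp [hS] at this
    rcases lt_trichotomy k₁ k₂ with hlt | heq | hgt
    · exact key k₁ k₂ hlt h
    · exact hne heq
    · exact key k₂ k₁ hgt h.symm
  rw [show (Finset.univ : Finset (Finset (Fin n)))
        = Finset.univ.image S ∪ (Finset.univ \ Finset.univ.image S) by
      simp [Finset.union_sdiff_of_subset (Finset.subset_univ _)],
    Finset.sum_union (Finset.disjoint_sdiff)]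
  have h2 : ∑ s ∈ Finset.univ \ Finset.univ.image S,
      (∏ i, if i ∈ s then β i else γ i) •
        f (fun i => if i ∈ s then v i.castSucc else v i.succ) = 0 := by
    refine Finset.sum_eq_zero fun s hs => ?_
    simp only [Finset.mem_sdiff, Finset.mem_image, Finset.mem_univ, true_and] at hs
    push_neg at hs
    rw [hzero s (fun k hk => hs k hk.symm), smul_zero]
  rw [h2, add_zero, Finset.sum_image (fun a _ b _ h => hSinj h)]
  -- Step 4: compute each term
  refine Finset.sum_congr rfl fun k _ => ?_
  have hprod : (∏ i, if i ∈ S k then β i else γ i)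
      = (∏ i ∈ Finset.univ.filter fun i : Fin n => (i : ℕ) < (k : ℕ), β i) *
        (∏ j ∈ Finset.univ.filter fun j : Fin n => (k : ℕ) ≤ (j : ℕ), γ j) := by
    rw [Finset.prod_ite]
    congr 1
    · congr 1; ext i; simp [hS]
    · congr 1; ext i; simp [hS, Nat.not_lt]
  have hrow : (fun i => if i ∈ S k then v i.castSucc else v i.succ)
      = fun i => v (k.succAbove i) := by
    funext i
    by_cases h : (i : ℕ) < (k : ℕ)
    · rw [if_pos (by simp [hS, h]), Fin.succAbove_of_castSucc_lt _ _ (by simpa [Fin.lt_def])]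
    · rw [if_neg (by simp [hS, h]), Fin.succAbove_of_le_castSucc _ _ (by simp [Fin.le_def]; omega)]
  rw [hprod, hrow, smul_eq_mul]
  rfl
end

section
/- Let n be an even positive integer and let N_n be the n×n skew-symmetric matrix over the rationals whose (i,j)-entry for i < j is 1 if j - i is odd and 0 if j - i is even. Then the Pfaffian of N_n equals 2^{n/2 - 1}. -/
/-- The Pfaffian of a `2n × 2n` matrix, defined by Laplace-type expansion along the
first row: `pf A = ∑ⱼ (-1)ʲ A 0 (j+1) pf (A with rows/columns 0 and j+1 deleted)`.
For skew-symmetric `A` this is the canonical polynomial with `pf A ^ 2 = det A`,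
normalized so that the Pfaffian of the standard block matrix `[[0,1],[-1,0]]` is `1`. -/
def pf {R : Type*} [CommRing R] : (n : ℕ) → Matrix (Fin (2 * n)) (Fin (2 * n)) R → R
  | 0, _ => 1
  | (n + 1), A => ∑ j : Fin (2 * n + 1),
      (-1 : R) ^ (j : ℕ) * A 0 j.succ *
        pf n (((A.submatrix Fin.succ Fin.succ)).submatrix j.succAbove j.succAbove)

open scoped Classical

def altOn (e : ℕ → Bool) (n : ℕ) : Prop := ∀ k, k + 1 < n → e k ≠ e (k + 1)

def Mmat (n : ℕ) (e : ℕ → Bool) : Matrix (Fin n) (Fin n) ℚ :=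
  Matrix.of fun i k => if e i = e k then 0 else
    if (i : ℕ) < (k : ℕ) then 1 else if (k : ℕ) < (i : ℕ) then -1 else 0

lemma bool_trans {a b c : Bool} (h1 : a ≠ b) (h2 : b ≠ c) : a = c := by
  cases a <;> cases b <;> cases c <;> simp_all

lemma alt_even {e : ℕ → Bool} {m : ℕ} (h : altOn e m) :
    ∀ k, 2*k < m → e (2*k) = e 0 := by
  intro k
  induction k with
  | zero => intro _; rfl
  | succ k ih =>
    intro hk
    have h1 := h (2*k) (by omega)
    have h2 := h (2*k+1) (by omega)
    have h3 : e (2*k) = e (2*k+1+1) := bool_trans h1 h2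
    have h4 : 2*(k+1) = 2*k+1+1 := by omega
    rw [h4, ← h3, ih (by omega)]

lemma alt_odd {e : ℕ → Bool} {m : ℕ} (h : altOn e m) :
    ∀ k, 2*k+1 < m → e (2*k+1) ≠ e 0 := by
  intro k
  induction k with
  | zero =>
    intro hk
    have h0 := h 0 hk
    simpa using h0.symm
  | succ k ih =>
    intro hk
    have h1 := h (2*k+1) (by omega)
    have h2 := h (2*k+1+1) (by omega)
    have h3 : e (2*k+1) = e (2*(k+1)+1) := by
      have h4 := bool_trans h1 h2
      rw [h4]
      congr 1
      try omega
    rw [← h3]; exact ih (by omega)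

lemma succAbove_val {n : ℕ} (j : Fin (n+1)) (a : Fin n) :
    ((j.succAbove a : Fin (n+1)) : ℕ) = if (a:ℕ) < (j:ℕ) then (a:ℕ) else (a:ℕ)+1 := by
  rcases lt_or_ge ((a:ℕ)) ((j:ℕ)) with h | h
  · rw [Fin.succAbove_of_castSucc_lt _ _ (by simpa [Fin.lt_def] using h), if_pos h]
    rfl
  · rw [Fin.succAbove_of_le_castSucc _ _ (by simpa [Fin.le_def] using h), if_neg (not_lt.2 h)]
    rfl

lemma minor_eq (n : ℕ) (e : ℕ → Bool) (j : Fin (2*n+1)) :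
    ((Mmat (2*(n+1)) e).submatrix Fin.succ Fin.succ).submatrix j.succAbove j.succAbove
      = Mmat (2*n) (fun k => if k < (j:ℕ) then e (k+1) else e (k+2)) := by
  ext a b
  have ha : (((j.succAbove a).succ : Fin (2*n+2)) : ℕ)
      = if (a:ℕ) < (j:ℕ) then (a:ℕ)+1 else (a:ℕ)+2 := by
    rw [Fin.val_succ, succAbove_val]; split <;> rfl
  have hb : (((j.succAbove b).succ : Fin (2*n+2)) : ℕ)
      = if (b:ℕ) < (j:ℕ) then (b:ℕ)+1 else (b:ℕ)+2 := by
    rw [Fin.val_succ, succAbove_val]; split <;> rfl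
  simp only [Matrix.submatrix_apply, Mmat, Matrix.of_apply, ha, hb]
  rcases lt_or_ge ((a:ℕ)) ((j:ℕ)) with h1 | h1 <;>
    rcases lt_or_ge ((b:ℕ)) ((j:ℕ)) with h2 | h2 <;>
    · split_ifs <;> first | rfl | omega

lemma entry0 (n : ℕ) (e : ℕ → Bool) (j : Fin (2*n+1)) :
    (Mmat (2*(n+1)) e) 0 j.succ = if e 0 = e ((j:ℕ)+1) then 0 else 1 := by
  have h0 : ((0 : Fin (2*(n+1))) : ℕ) = 0 := rfl
  simp only [Mmat, Matrix.of_apply, Fin.val_succ, h0]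
  split_ifs <;> first | rfl | omega

lemma sum_pair {M : Type*} [AddCommMonoid M] {n : ℕ} (f : Fin n → M) (a b : Fin n)
    (hab : a ≠ b) (h : ∀ j, j ≠ a → j ≠ b → f j = 0) :
    ∑ j, f j = f a + f b := by
  classical
  have hf : ∀ j, f j = (if j = a then f a else 0) + (if j = b then f b else 0) := by
    intro j
    by_cases h1 : j = a
    · subst h1; rw [if_pos rfl, if_neg hab]; simp
    · by_cases h2 : j = b
      · subst h2; rw [if_neg h1, if_pos rfl]; simp
      · rw [if_neg h1, if_neg h2, h j h1 h2]; simp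
  rw [Finset.sum_congr rfl (fun j _ => hf j), Finset.sum_add_distrib,
    Finset.sum_ite_eq', Finset.sum_ite_eq']
  simp


lemma key : ∀ (n : ℕ) (e : ℕ → Bool),
    pf n (Mmat (2*n) e) = if altOn e (2*n) then (2:ℚ)^(n-1) else 0 := by
  intro n
  induction n with
  | zero =>
    intro e
    rw [pf, if_pos]
    · norm_num
    · intro k hk; omega
  | succ n ih =>
    intro e
    rw [pf]
    have hterm : ∀ j : Fin (2*n+1),
        (-1:ℚ)^(j:ℕ) * (Mmat (2*(n+1)) e) 0 j.succ *
          pf n (((Mmat (2*(n+1)) e).submatrix Fin.succ Fin.succ).submatrix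
            j.succAbove j.succAbove)
        = (-1:ℚ)^(j:ℕ) * (if e 0 = e ((j:ℕ)+1) then 0 else 1) *
          (if altOn (fun k => if k < (j:ℕ) then e (k+1) else e (k+2)) (2*n)
            then (2:ℚ)^(n-1) else 0) := by
      intro j
      rw [minor_eq, ih, entry0]
    rw [Finset.sum_congr rfl (fun j _ => hterm j)]
    by_cases halt : altOn e (2*(n+1))
    · rw [if_pos halt]
      rcases Nat.eq_zero_or_pos n with hn | hn
      · subst hn
        rw [Finset.sum_eq_single (⟨0, by omega⟩ : Fin (2*0+1))]
        · have hv : (((⟨0, by omega⟩ : Fin (2*0+1))) : ℕ) = 0 := rfl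
          simp only [hv]
          rw [if_neg (halt 0 (by omega)), if_pos (by intro k hk; omega)]
          norm_num
        · intro b _ hb
          exact absurd (Fin.ext (show ((b:ℕ)) = 0 by omega)) hb
        · intro hmem
          exact absurd (Finset.mem_univ _) hmem
      · -- n ≥ 1 : only first and last terms survive
        have hmid : ∀ j : Fin (2*n+1), j ≠ ⟨0, by omega⟩ → j ≠ ⟨2*n, by omega⟩ →
            (-1:ℚ)^(j:ℕ) * (if e 0 = e ((j:ℕ)+1) then 0 else 1) *
              (if altOn (fun k => if k < (j:ℕ) then e (k+1) else e (k+2)) (2*n)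
                then (2:ℚ)^(n-1) else 0) = 0 := by
          intro j hj0 hjl
          have hj1 : 0 < (j:ℕ) := by
            rcases Nat.eq_zero_or_pos (j:ℕ) with h | h
            · exact absurd (Fin.ext (show ((j:ℕ)) = 0 by omega)) hj0
            · exact h
          have hj2 : (j:ℕ) < 2*n := by
            have := j.isLt
            rcases Nat.lt_or_ge (j:ℕ) (2*n) with h | h
            · exact h
            · exact absurd (Fin.ext (show ((j:ℕ)) = 2*n by omega)) hjl
          obtain ⟨j', hj'⟩ : ∃ j', (j:ℕ) = j'+1 := ⟨(j:ℕ)-1, by omega⟩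
          have hna : ¬ altOn (fun k => if k < (j:ℕ) then e (k+1) else e (k+2)) (2*n) := by
            intro hA
            have h5 := hA j' (by omega)
            beta_reduce at h5
            simp only [hj'] at h5
            rw [if_pos (by omega), if_neg (by omega)] at h5
            exact h5 (bool_trans (halt (j'+1) (by omega)) (halt (j'+2) (by omega)))
          rw [if_neg hna, mul_zero]
        rw [sum_pair _ ⟨0, by omega⟩ ⟨2*n, by omega⟩ (by
          intro hcontra
          have h6 : (0 : ℕ) = 2*n := congrArg Fin.val hcontra
          omega) hmid]
        beta_reduce
        have hva : (((⟨0, by omega⟩ : Fin (2*n+1))) : ℕ) = 0 := rfl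
        have hvb : (((⟨2*n, by omega⟩ : Fin (2*n+1))) : ℕ) = 2*n := rfl
        simp only [hva, hvb]
        rw [if_neg (halt 0 (by omega)),
          if_pos (show altOn (fun k => if k < 0 then e (k+1) else e (k+2)) (2*n) by
            intro k hk
            beta_reduce
            rw [if_neg (by omega : ¬ k < 0), if_neg (by omega : ¬ k + 1 < 0)]
            exact halt (k+2) (by omega)),
          if_neg (show ¬ e 0 = e (2*n+1) from
            fun hEq => (alt_odd halt n (by omega)) hEq.symm),
          if_pos (show altOn (fun k => if k < 2*n then e (k+1) else e (k+2)) (2*n) by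
            intro k hk
            beta_reduce
            rw [if_pos (by omega), if_pos (by omega)]
            exact halt (k+1) (by omega))]
        have hpow : (-1:ℚ)^(2*n) = 1 := by
          rw [pow_mul]; norm_num
        rw [hpow]
        have hsum : (2:ℚ)^(n-1) + (2:ℚ)^(n-1) = 2^(n+1-1) := by
          rw [show n+1-1 = (n-1)+1 by omega, pow_succ]
          ring
        rw [← hsum]
        ring
    · rw [if_neg halt]
      by_cases hd : ∃ K', K' + 2 < 2*n + 2 ∧ e (K'+1) = e (K'+2)
      · obtain ⟨K', hK1, hK2⟩ := hd
        have hKlt : K' < 2*n := by omega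
        have hmid : ∀ j : Fin (2*n+1), j ≠ ⟨K', by omega⟩ → j ≠ ⟨K'+1, by omega⟩ →
            (-1:ℚ)^(j:ℕ) * (if e 0 = e ((j:ℕ)+1) then 0 else 1) *
              (if altOn (fun k => if k < (j:ℕ) then e (k+1) else e (k+2)) (2*n)
                then (2:ℚ)^(n-1) else 0) = 0 := by
          intro j hj0 hjl
          have hja : (j:ℕ) ≠ K' := fun h => hj0 (Fin.ext (show ((j:ℕ)) = K' by omega))
          have hjb : (j:ℕ) ≠ K'+1 := fun h => hjl (Fin.ext (show ((j:ℕ)) = K'+1 by omega))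
          have hna : ¬ altOn (fun k => if k < (j:ℕ) then e (k+1) else e (k+2)) (2*n) := by
            intro hA
            rcases Nat.lt_or_ge (j:ℕ) K' with hlt | hge
            · obtain ⟨K'', hK''⟩ : ∃ K'', K' = K''+1 := ⟨K'-1, by omega⟩
              have h5 := hA K'' (by omega)
              beta_reduce at h5
              rw [if_neg (by omega), if_neg (by omega)] at h5
              apply h5
              rw [hK''] at hK2
              exact hK2
            · have hgt : K'+1 < (j:ℕ) := by omega
              have h5 := hA K' (by omega)
              beta_reduce at h5
              rw [if_pos (by omega), if_pos (by omega)] at h5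
              exact h5 hK2
          rw [if_neg hna, mul_zero]
        rw [sum_pair _ ⟨K', by omega⟩ ⟨K'+1, by omega⟩ (by
          intro hcontra
          have h6 : K' = K'+1 := congrArg Fin.val hcontra
          omega) hmid]
        beta_reduce
        have hva : (((⟨K', by omega⟩ : Fin (2*n+1))) : ℕ) = K' := rfl
        have hvb : (((⟨K'+1, by omega⟩ : Fin (2*n+1))) : ℕ) = K'+1 := rfl
        simp only [hva, hvb]
        have hE : (fun k => if k < K' then e (k+1) else e (k+2))
            = (fun k => if k < K'+1 then e (k+1) else e (k+2)) := by
          funext k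
          by_cases h1 : k < K'
          · rw [if_pos h1, if_pos (by omega)]
          · by_cases h2 : k < K'+1
            · have hk' : k = K' := by omega
              subst hk'
              rw [if_neg h1, if_pos h2]
              exact hK2.symm
            · rw [if_neg h1, if_neg h2]
        have hent : (if e 0 = e (K'+1) then (0:ℚ) else 1)
            = (if e 0 = e (K'+1+1) then 0 else 1) := by
          have h7 : e (K'+1) = e (K'+1+1) := hK2
          rw [h7]
        have hsgn : (-1:ℚ)^(K'+1) = -(-1:ℚ)^K' := by
          rw [pow_succ]; ring
        rw [hE, hent, hsgn]
        ring
      · push_neg at hd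
        have he01 : e 0 = e 1 := by
          unfold altOn at halt
          push_neg at halt
          obtain ⟨k, hk1, hk2⟩ := halt
          rcases Nat.eq_zero_or_pos k with h | h
          · subst h; exact hk2
          · obtain ⟨k'', hk''⟩ : ∃ k'', k = k''+1 := ⟨k-1, by omega⟩
            subst hk''
            exact absurd hk2 (hd k'' (by omega))
        apply Finset.sum_eq_zero
        intro j _
        rcases Nat.eq_zero_or_pos (j:ℕ) with h0 | h0
        · rw [h0, if_pos (show e 0 = e (0+1) from he01)]
          ring
        rcases Nat.lt_or_ge (j:ℕ) (2*n) with hjlt | hjge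
        · obtain ⟨j'', hj''⟩ : ∃ j'', (j:ℕ) = j''+1 := ⟨(j:ℕ)-1, by omega⟩
          have hna : ¬ altOn (fun k => if k < (j:ℕ) then e (k+1) else e (k+2)) (2*n) := by
            intro hA
            have h5 := hA j'' (by omega)
            beta_reduce at h5
            simp only [hj''] at h5
            rw [if_pos (by omega), if_neg (by omega)] at h5
            exact h5 (bool_trans (hd j'' (by omega)) (hd (j''+1) (by omega)))
          rw [if_neg hna, mul_zero]
        · have hj2n : (j:ℕ) = 2*n := by
            have := j.isLt; omega
          have tail : altOn (fun k => e (k+1)) (2*n+1) := by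
            intro k hk
            exact hd k (by omega)
          have h2n1 : e (2*n+1) = e 1 := alt_even tail n (by omega)
          rw [hj2n, if_pos (he01.trans h2n1.symm)]
          ring

/-- The Pfaffian of the `n × n` (with `n = 2m` even) skew-symmetric matrix whose
`(i,j)`-entry for `i < j` is `1` if `j - i` is odd and `0` if `j - i` is even,
equals `2 ^ (n/2 - 1)`. -/
theorem pf_N (m : ℕ) (hm : 1 ≤ m) :
    pf m (Matrix.of fun i j : Fin (2 * m) =>
      if (i : ℕ) < (j : ℕ) then (if ((j : ℕ) - (i : ℕ)) % 2 = 1 then (1 : ℚ) else 0)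
      else if (j : ℕ) < (i : ℕ) then (if ((i : ℕ) - (j : ℕ)) % 2 = 1 then -1 else 0)
      else 0) = 2 ^ (m - 1) := by
  have hN : (Matrix.of fun i j : Fin (2 * m) =>
      if (i : ℕ) < (j : ℕ) then (if ((j : ℕ) - (i : ℕ)) % 2 = 1 then (1 : ℚ) else 0)
      else if (j : ℕ) < (i : ℕ) then (if ((i : ℕ) - (j : ℕ)) % 2 = 1 then -1 else 0)
      else 0) = Mmat (2*m) (fun k => decide (k % 2 = 1)) := by
    ext i j
    simp only [Mmat, Matrix.of_apply, decide_eq_decide]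
    split_ifs <;> first | rfl | omega
  rw [hN, key, if_pos]
  intro k hk
  simp only [ne_eq, decide_eq_decide]
  omega
end

section
/- Let n be an even positive integer, u_1, ..., u_n indeterminates, and ε = (ε_1, ..., ε_n) ∈ {1, -1}^n. Let M^ε(u) be the n×n skew-symmetric matrix whose (i,j)-entry for i < j is 1 + u_i u_j if ε_i ε_j = (-1)^{i+j+1}, and u_i + u_j if ε_i ε_j = (-1)^{i+j}. Then pf(M^ε(u)) = 2^{n/2 - 1} ( ∏_{i : ε_i = 1} u_i + ∏_{i : ε_i = -1} u_i ). -/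
namespace PfAux

variable {R : Type*} [CommRing R]

/-- alternating pick: `a` at even indices, `b` at odd. -/
def cc (a b : ℕ → R) (i : ℕ) : R := if Even i then a i else b i

/-- the skew matrix with entries `a i * b j + a j * b i` above the diagonal. -/
def mS (a b : ℕ → R) (n : ℕ) : Matrix (Fin n) (Fin n) R :=
  Matrix.of fun i j => if (i : ℕ) < (j : ℕ) then a i * b j + a j * b i
    else if (j : ℕ) < (i : ℕ) then -(a i * b j + a j * b i) else 0

lemma val_succAbove {n : ℕ} (p : Fin (n + 1)) (i : Fin n) :
    ((p.succAbove i : Fin (n + 1)) : ℕ) =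
      if (i : ℕ) < (p : ℕ) then (i : ℕ) else (i : ℕ) + 1 := by
  rcases lt_or_ge ((i : ℕ)) ((p : ℕ)) with h | h
  · rw [Fin.succAbove_of_castSucc_lt p i (by simpa [Fin.lt_def] using h), if_pos h]
    simp
  · rw [Fin.succAbove_of_le_castSucc p i (by simpa [Fin.le_def] using h), if_neg (not_lt.2 h)]
    simp

lemma telescope (p q : ℕ → R) (N : ℕ) :
    ∑ j ∈ Finset.range (2 * N + 1),
      (if Even j then p j + q (j + 1) else -(p (j + 1) + q j))
      = p 0 + q (2 * N + 1) := by
  induction N with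
  | zero => simp
  | succ N ih =>
    rw [show 2 * (N + 1) + 1 = (2 * N + 1) + 1 + 1 by ring, Finset.sum_range_succ,
      Finset.sum_range_succ, ih]
    have h1 : ¬ Even (2 * N + 1) := by simp [Nat.even_add_one]
    have h2 : Even (2 * N + 1 + 1) := by simpa [Nat.even_add_one] using h1
    rw [if_neg h1, if_pos h2]
    simp only [show 2 * N + 1 + 1 = 2 * N + 2 from by ring, show 2 * N + 2 + 1 = 2 * N + 3 from by ring,
      show 2 * (N + 1) + 1 = 2 * N + 3 from by ring]
    ring

/-- index shift skipping `j+1`, as a map on naturals. -/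
def sh (j k : ℕ) : ℕ := if k < j then k + 1 else k + 2

lemma minor_eq (a b : ℕ → R) (m : ℕ) (j : Fin (2 * m + 1)) :
    (((mS a b (2 * m + 2)).submatrix Fin.succ Fin.succ).submatrix j.succAbove j.succAbove)
      = mS (fun k => a (sh (j : ℕ) k)) (fun k => b (sh (j : ℕ) k)) (2 * m) := by
  have key : ∀ i : Fin (2 * m),
      ((Fin.succ (j.succAbove i) : Fin (2 * m + 2)) : ℕ) = sh (j : ℕ) (i : ℕ) := by
    intro i
    have h := val_succAbove j i
    simp only [Fin.val_succ, h, sh]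
    split <;> omega
  have hkl : ∀ k l : Fin (2 * m),
      (sh (j : ℕ) (k : ℕ) < sh (j : ℕ) (l : ℕ)) ↔ (k : ℕ) < (l : ℕ) := by
    intro k l; unfold sh; split <;> split <;> omega
  ext k l
  simp only [Matrix.submatrix_apply, mS, Matrix.of_apply, key, hkl]

lemma prod_cc_sh (a b : ℕ → R) (m j : ℕ) (hj : j ≤ 2 * m) :
    (∏ k ∈ Finset.range (2 * m),
        cc (fun k => a (sh j k)) (fun k => b (sh j k)) k)
      = (∏ i ∈ Finset.Ico 1 (j + 1), cc b a i) *
          ∏ i ∈ Finset.Ico (j + 2) (2 * m + 2), cc a b i := by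
  have pt1 : ∀ k, k < j →
      cc (fun k => a (sh j k)) (fun k => b (sh j k)) k = cc b a (k + 1) := by
    intro k hk
    simp only [cc, sh, if_pos hk]
    rcases Nat.even_or_odd k with h | h <;>
      simp [h, Nat.even_add_one, Nat.not_even_iff_odd.mpr, ← Nat.not_even_iff_odd]
  have pt2 : ∀ k, j ≤ k →
      cc (fun k => a (sh j k)) (fun k => b (sh j k)) k = cc a b (k + 2) := by
    intro k hk
    simp only [cc, sh, if_neg (not_lt.2 hk)]
    rcases Nat.even_or_odd k with h | h <;>
      simp [h, Nat.even_add_one, Nat.not_even_iff_odd.mpr, ← Nat.not_even_iff_odd,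
        parity_simps]
  rw [Finset.range_eq_Ico, ← Finset.prod_Ico_consecutive _ (Nat.zero_le j) hj]
  congr 1
  · rw [Finset.prod_Ico_eq_prod_range, Finset.prod_Ico_eq_prod_range]
    simp only [Nat.sub_zero, Nat.add_sub_cancel, Nat.zero_add, zero_add]
    refine Finset.prod_congr rfl fun k hk => ?_
    have hk' : k < j := by simpa using hk
    rw [Nat.add_comm 1 k]
    exact pt1 k hk'
  · rw [Finset.prod_Ico_eq_prod_range, Finset.prod_Ico_eq_prod_range]
    have hsub : 2 * m + 2 - (j + 2) = 2 * m - j := by omega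
    rw [hsub]
    refine Finset.prod_congr rfl fun k hk => ?_
    rw [pt2 (j + k) (Nat.le_add_right j k)]
    congr 1
    omega

/-- suffix-product pair. -/
def RP (a b : ℕ → R) (n j : ℕ) : R :=
  (∏ i ∈ Finset.Ico 1 (j + 1), cc b a i) * ∏ i ∈ Finset.Ico (j + 1) n, cc a b i

def PC (a b : ℕ → R) (n j : ℕ) : R :=
  (∏ i ∈ Finset.Ico 1 (j + 1), cc b a i) * ∏ i ∈ Finset.Ico (j + 2) n, cc a b i

lemma RP_bot (a b : ℕ → R) (n j : ℕ) (h : j + 1 < n) :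
    RP a b n j = PC a b n j * cc a b (j + 1) := by
  rw [RP, PC, Finset.prod_eq_prod_Ico_succ_bot h]
  ring

lemma RP_top (a b : ℕ → R) (n j : ℕ) :
    RP a b n (j + 1) = PC a b n j * cc b a (j + 1) := by
  rw [RP, PC, Finset.prod_Ico_succ_top (by omega : 1 ≤ j + 1)]
  ring

lemma pf_mS (m : ℕ) (hm : 1 ≤ m) : ∀ a b : ℕ → R,
    pf m (mS a b (2 * m)) = 2 ^ (m - 1) *
      ((∏ i ∈ Finset.range (2 * m), cc a b i) +
        ∏ i ∈ Finset.range (2 * m), cc b a i) := by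
  induction m, hm using Nat.le_induction with
  | base =>
    intro a b
    show (∑ j : Fin 1, (-1 : R) ^ (j : ℕ) * mS a b 2 0 j.succ * pf 0 _) = _
    simp [pf, mS, cc, Finset.prod_range_succ]
    ring
  | succ m hm ih =>
    intro a b
    show pf (m + 1) (mS a b (2 * m + 2)) = 2 ^ m *
      ((∏ i ∈ Finset.range (2 * m + 2), cc a b i) +
        ∏ i ∈ Finset.range (2 * m + 2), cc b a i)
    have key : pf (m + 1) (mS a b (2 * m + 2)) =
        ∑ j ∈ Finset.range (2 * m + 1),
          (-1 : R) ^ j * (a 0 * b (j + 1) + a (j + 1) * b 0) *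
            (2 ^ (m - 1) * (PC a b (2 * m + 2) j + PC b a (2 * m + 2) j)) := by
      rw [pf, ← Fin.sum_univ_eq_sum_range]
      refine Finset.sum_congr rfl fun j _ => ?_
      have h0 : mS a b (2 * m + 2) 0 j.succ
          = a 0 * b ((j : ℕ) + 1) + a ((j : ℕ) + 1) * b 0 := by
        simp [mS]
      have hminor := minor_eq a b m j
      rw [h0, hminor, ih, prod_cc_sh a b m (j : ℕ) (by omega),
        prod_cc_sh b a m (j : ℕ) (by omega), PC, PC]
    rw [key]
    have hterm : ∀ j ∈ Finset.range (2 * m + 1),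
        (-1 : R) ^ j * (a 0 * b (j + 1) + a (j + 1) * b 0) *
            (2 ^ (m - 1) * (PC a b (2 * m + 2) j + PC b a (2 * m + 2) j))
          = 2 ^ (m - 1) *
            (if Even j then
                (a 0 * RP a b (2 * m + 2) j + b 0 * RP b a (2 * m + 2) j) +
                  (b 0 * RP a b (2 * m + 2) (j + 1) + a 0 * RP b a (2 * m + 2) (j + 1))
              else
                -((a 0 * RP a b (2 * m + 2) (j + 1) + b 0 * RP b a (2 * m + 2) (j + 1)) +
                  (b 0 * RP a b (2 * m + 2) j + a 0 * RP b a (2 * m + 2) j))) := by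
      intro j hj
      have hjn : j + 1 < 2 * m + 2 := by
        simp only [Finset.mem_range] at hj; omega
      rcases Nat.even_or_odd j with hjp | hjp
      · have hc1 : cc a b (j + 1) = b (j + 1) := by
          simp [cc, Nat.even_add_one, hjp]
        have hc2 : cc b a (j + 1) = a (j + 1) := by
          simp [cc, Nat.even_add_one, hjp]
        rw [if_pos hjp, hjp.neg_one_pow, RP_bot a b _ _ hjn, RP_bot b a _ _ hjn,
          RP_top a b, RP_top b a, hc1, hc2]
        ring
      · have hc1 : cc a b (j + 1) = a (j + 1) := by
          simp [cc, Nat.even_add_one, Nat.not_even_iff_odd.mpr hjp]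
        have hc2 : cc b a (j + 1) = b (j + 1) := by
          simp [cc, Nat.even_add_one, Nat.not_even_iff_odd.mpr hjp]
        rw [if_neg (by simpa using Nat.not_even_iff_odd.mpr hjp), hjp.neg_one_pow,
          RP_bot a b _ _ hjn, RP_bot b a _ _ hjn, RP_top a b, RP_top b a, hc1, hc2]
        ring
    rw [Finset.sum_congr rfl hterm, ← Finset.mul_sum,
      telescope (fun j => a 0 * RP a b (2 * m + 2) j + b 0 * RP b a (2 * m + 2) j)
        (fun j => b 0 * RP a b (2 * m + 2) j + a 0 * RP b a (2 * m + 2) j) m]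
    have hRP0 : ∀ a b : ℕ → R, RP a b (2 * m + 2) 0 = ∏ i ∈ Finset.Ico 1 (2 * m + 2), cc a b i := by
      intro a b
      rw [RP]
      simp
    have hRPtop : ∀ a b : ℕ → R,
        RP a b (2 * m + 2) (2 * m + 1) = ∏ i ∈ Finset.Ico 1 (2 * m + 2), cc b a i := by
      intro a b
      rw [RP]
      simp
    have hfull : ∀ a b : ℕ → R,
        (∏ i ∈ Finset.range (2 * m + 2), cc a b i)
          = a 0 * ∏ i ∈ Finset.Ico 1 (2 * m + 2), cc a b i := by
      intro a b
      rw [Finset.range_eq_Ico, Finset.prod_eq_prod_Ico_succ_bot (by omega : 0 < 2 * m + 2)]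
      simp [cc]
    rw [hRP0, hRP0, hRPtop, hRPtop, hfull, hfull]
    have h2 : (2 : R) ^ (m - 1) * 2 = 2 ^ m := by
      rw [← pow_succ]
      congr 1
      omega
    rw [← h2]
    ring

end PfAux


open MvPolynomial in
/-- For `n = 2m` even, signs `ε ∈ {1,-1}ⁿ` and indeterminates `u_i = X i`, the
Pfaffian of the skew-symmetric matrix `M^ε(u)` whose `(i,j)`-entry for `i < j` is
`1 + u_i u_j` when `ε_i ε_j = (-1)^{i+j+1}` and `u_i + u_j` when `ε_i ε_j = (-1)^{i+j}`
equals `2^{m-1} (∏_{ε_i = 1} u_i + ∏_{ε_i = -1} u_i)`.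
(Indices here are `0`-based, so `(-1)^{i+j+1}` for `1`-based indices is
`(-1)^{(i+1)+(j+1)+1} = (-1)^{i+j+1}` — unchanged.) -/
theorem pf_M (m : ℕ) (hm : 1 ≤ m) (ε : Fin (2 * m) → ℤ)
    (hε : ∀ i, ε i = 1 ∨ ε i = -1) :
    pf m (Matrix.of fun i j : Fin (2 * m) =>
      if (i : ℕ) < (j : ℕ) then
        (if ε i * ε j = (-1) ^ ((i : ℕ) + (j : ℕ) + 1) then
          1 + X i * X j else X i + X j : MvPolynomial (Fin (2 * m)) ℚ)
      else if (j : ℕ) < (i : ℕ) then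
        -(if ε j * ε i = (-1) ^ ((j : ℕ) + (i : ℕ) + 1) then
          1 + X j * X i else X j + X i)
      else 0) =
      2 ^ (m - 1) *
        ((∏ i ∈ Finset.univ.filter fun i => ε i = 1, X i) +
          (∏ i ∈ Finset.univ.filter fun i => ε i = -1, X i)) := by
  classical
  set a : ℕ → MvPolynomial (Fin (2 * m)) ℚ := fun i =>
    if h : i < 2 * m then (if ε ⟨i, h⟩ = (-1) ^ i then X ⟨i, h⟩ else 1) else 1 with ha
  set b : ℕ → MvPolynomial (Fin (2 * m)) ℚ := fun i =>
    if h : i < 2 * m then (if ε ⟨i, h⟩ = (-1) ^ i then 1 else X ⟨i, h⟩) else 1 with hb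
  have key : ∀ i : Fin (2 * m),
      (a ↑i = X i ∧ b ↑i = 1 ∧ ε i = (-1 : ℤ) ^ (i : ℕ)) ∨
      (a ↑i = 1 ∧ b ↑i = X i ∧ ε i = -(-1 : ℤ) ^ (i : ℕ)) := by
    intro i
    by_cases hc : ε i = (-1 : ℤ) ^ (i : ℕ)
    · left
      refine ⟨?_, ?_, hc⟩ <;> simp [ha, hb, i.isLt, hc]
    · right
      have hc2 : ε i = -(-1 : ℤ) ^ (i : ℕ) := by
        rcases hε i with h | h <;> rcases neg_one_pow_eq_or ℤ (i : ℕ) with h2 | h2 <;>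
          simp_all
      refine ⟨?_, ?_, hc2⟩ <;> simp [ha, hb, i.isLt, hc]
  have hne : ∀ k : ℕ, ((-1 : ℤ)) ^ k ≠ (-1) ^ (k + 1) := by
    intro k
    rcases neg_one_pow_eq_or ℤ k with hk | hk <;> simp [pow_succ, hk]
  have entry : ∀ i j : Fin (2 * m),
      (if ε i * ε j = (-1) ^ ((i : ℕ) + (j : ℕ) + 1) then
          (1 + X i * X j : MvPolynomial (Fin (2 * m)) ℚ) else X i + X j)
        = a ↑i * b ↑j + a ↑j * b ↑i := by
    intro i j
    obtain ⟨ea1, eb1, ec1⟩ | ⟨ea1, eb1, ec1⟩ := key i <;>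
      obtain ⟨ea2, eb2, ec2⟩ | ⟨ea2, eb2, ec2⟩ := key j
    · rw [if_neg (by rw [ec1, ec2, ← pow_add]; exact hne _), ea1, eb1, ea2, eb2]
      ring
    · rw [if_pos (by rw [ec1, ec2, pow_succ, pow_add]; ring), ea1, eb1, ea2, eb2]
      ring
    · rw [if_pos (by rw [ec1, ec2, pow_succ, pow_add]; ring), ea1, eb1, ea2, eb2]
      ring
    · rw [if_neg (by
          rw [ec1, ec2,
            show (-(-1 : ℤ) ^ (i : ℕ)) * (-(-1) ^ (j : ℕ)) = (-1) ^ ((i : ℕ) + (j : ℕ)) from by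
              rw [pow_add]; ring]
          exact hne _), ea1, eb1, ea2, eb2]
      ring
  have hmat : (Matrix.of fun i j : Fin (2 * m) =>
      if (i : ℕ) < (j : ℕ) then
        (if ε i * ε j = (-1) ^ ((i : ℕ) + (j : ℕ) + 1) then
          1 + X i * X j else X i + X j : MvPolynomial (Fin (2 * m)) ℚ)
      else if (j : ℕ) < (i : ℕ) then
        -(if ε j * ε i = (-1) ^ ((j : ℕ) + (i : ℕ) + 1) then
          1 + X j * X i else X j + X i)
      else 0) = PfAux.mS a b (2 * m) := by
    refine Matrix.ext fun i j => ?_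
    rw [Matrix.of_apply, PfAux.mS, Matrix.of_apply]
    rcases lt_trichotomy ((i : ℕ)) ((j : ℕ)) with h | h | h
    · rw [if_pos h, if_pos h, entry i j]
    · rw [if_neg (show ¬((i : ℕ) < (j : ℕ)) by omega),
        if_neg (show ¬((j : ℕ) < (i : ℕ)) by omega),
        if_neg (show ¬((i : ℕ) < (j : ℕ)) by omega),
        if_neg (show ¬((j : ℕ) < (i : ℕ)) by omega)]
    · rw [if_neg (show ¬((i : ℕ) < (j : ℕ)) by omega), if_pos h,
        if_neg (show ¬((i : ℕ) < (j : ℕ)) by omega), if_pos h, entry j i]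
      ring
  have hprod1 : (∏ i ∈ Finset.range (2 * m), PfAux.cc a b i)
      = ∏ i ∈ Finset.univ.filter (fun i => ε i = 1), X i := by
    rw [Finset.prod_filter, ← Fin.prod_univ_eq_prod_range]
    refine Finset.prod_congr rfl fun i _ => ?_
    rcases key i with ⟨ea, eb, ec⟩ | ⟨ea, eb, ec⟩ <;>
      rcases Nat.even_or_odd (i : ℕ) with p | p <;>
      simp [PfAux.cc, p, ea, eb, ec, p.neg_one_pow]
  have hprod2 : (∏ i ∈ Finset.range (2 * m), PfAux.cc b a i)
      = ∏ i ∈ Finset.univ.filter (fun i => ε i = -1), X i := by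
    rw [Finset.prod_filter, ← Fin.prod_univ_eq_prod_range]
    refine Finset.prod_congr rfl fun i _ => ?_
    rcases key i with ⟨ea, eb, ec⟩ | ⟨ea, eb, ec⟩ <;>
      rcases Nat.even_or_odd (i : ℕ) with p | p <;>
      simp [PfAux.cc, p, ea, eb, ec, p.neg_one_pow]
  rw [hmat, PfAux.pf_mS m hm a b, hprod1, hprod2]
end

section
/- Let p_1^⊥ denote the skewing operator on symmetric functions adjoint to multiplication by the first power sum p_1 with respect to the Hall inner product, and for r ∈ ℤ let f_r = ∑_{n ∈ ℤ} e_n e_{n+r} where e_n is the n-th elementary symmetric function (e_n = 0 for n < 0). Then for all integers i and all j ≥ 0, (p_1^⊥)^j f_i = ∑_{r=0}^{j} binom(j, r) f_{i - j + 2r}. -/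
/-!
We model the completed ring of symmetric functions `Λ̂` over `ℚ` as the ring of
formal power series in the power-sum generators: `MvPowerSeries ℕ ℚ`, where the
variable `X n` represents the power sum `p (n+1)`.
-/

/-- The symmetric-function weight of a monomial in the power sums:
the variable `X i` (representing `p (i+1)`) has degree `i + 1`. -/
def psWeight (d : ℕ →₀ ℕ) : ℕ := d.sum fun i m => (i + 1) * m

/-- The elementary symmetric functions, defined via Newton's identities
`(n+1) e_{n+1} = ∑_{k=1}^{n+1} (-1)^{k-1} e_{n+1-k} p_k`, expressed in the
power-sum model of the ring of symmetric functions. -/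
noncomputable def esym : ℕ → MvPowerSeries ℕ ℚ
  | 0 => 1
  | (n + 1) => (((n : ℚ) + 1)⁻¹) •
      ∑ j ∈ Finset.range (n + 1),
        ((-1 : MvPowerSeries ℕ ℚ)) ^ j * esym (n - j) * MvPowerSeries.X j
  decreasing_by exact Nat.lt_succ_of_le (Nat.sub_le n j)

/-- `esymZ k = e_k`, extended by `0` to negative indices. -/
noncomputable def esymZ (k : ℤ) : MvPowerSeries ℕ ℚ :=
  if 0 ≤ k then esym k.toNat else 0

/-- `fSym r = ∑_{n ∈ ℤ} e_n e_{n+r}`, defined coefficientwise (for each monomial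
only finitely many summands contribute, by homogeneity). -/
noncomputable def fSym (r : ℤ) : MvPowerSeries ℕ ℚ :=
  fun d => ∑ n ∈ Finset.range (psWeight d + 1),
    MvPowerSeries.coeff d (esymZ n * esymZ (n + r))

/-- The skewing operator `p₁^⊥`, the adjoint of multiplication by `p₁` with
respect to the Hall inner product; equivalently the derivation `∂/∂p₁` in the
power-sum model, here defined coefficientwise. -/
noncomputable def pperp (F : MvPowerSeries ℕ ℚ) : MvPowerSeries ℕ ℚ :=
  fun d => ((d 0 : ℚ) + 1) * MvPowerSeries.coeff (d + Finsupp.single 0 1) F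

open MvPowerSeries Finset

abbrev MM := MvPowerSeries ℕ ℚ

/-! ### Weights and homogeneity -/

lemma psWeight_add (a b : ℕ →₀ ℕ) : psWeight (a + b) = psWeight a + psWeight b :=
  Finsupp.sum_add_index' (by simp) (by intros; ring)

lemma psWeight_single (i m : ℕ) : psWeight (Finsupp.single i m) = (i+1) * m := by
  simp [psWeight, Finsupp.sum_single_index]

lemma psWeight_zero : psWeight 0 = 0 := by simp [psWeight]

def IsHom (w : ℕ) (F : MM) : Prop := ∀ d, psWeight d ≠ w → MvPowerSeries.coeff d F = 0

lemma isHom_one : IsHom 0 (1 : MM) := by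
  intro d hd
  rw [coeff_one, if_neg]
  rintro rfl; exact hd psWeight_zero

lemma isHom_X (j : ℕ) : IsHom (j+1) (X j : MM) := by
  intro d hd
  rw [coeff_X, if_neg]
  rintro rfl; simp [psWeight_single] at hd

lemma isHom_mul {w w' : ℕ} {F G : MM} (hF : IsHom w F) (hG : IsHom w' G) :
    IsHom (w + w') (F * G) := by
  intro d hd
  rw [coeff_mul]
  refine Finset.sum_eq_zero fun p hp => ?_
  rw [Finset.HasAntidiagonal.mem_antidiagonal] at hp
  by_cases h1 : psWeight p.1 = w
  · have h2 : psWeight p.2 ≠ w' := by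
      intro h2; apply hd; rw [← hp, psWeight_add, h1, h2]
    rw [hG _ h2, mul_zero]
  · rw [hF _ h1, zero_mul]

lemma isHom_smul {w : ℕ} {F : MM} (c : ℚ) (hF : IsHom w F) : IsHom w (c • F) := by
  intro d hd; rw [MvPowerSeries.coeff_smul, hF d hd, mul_zero]

lemma isHom_neg {w : ℕ} {F : MM} (hF : IsHom w F) : IsHom w (-F) := by
  intro d hd; rw [map_neg, hF d hd, neg_zero]

lemma isHom_sum {w : ℕ} {s : Finset ℕ} {F : ℕ → MM} (hF : ∀ j ∈ s, IsHom w (F j)) :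
    IsHom w (∑ j ∈ s, F j) := by
  intro d hd
  rw [map_sum]
  exact Finset.sum_eq_zero fun j hj => hF j hj d hd

lemma isHom_neg_one_pow (j : ℕ) : IsHom 0 ((-1 : MM) ^ j) := by
  induction j with
  | zero => rw [pow_zero]; exact isHom_one
  | succ n ih => rw [pow_succ, mul_neg_one]; exact isHom_neg ih

lemma isHom_congr {w w' : ℕ} {F : MM} (hF : IsHom w F) (h : w = w') : IsHom w' F := h ▸ hF

lemma esym_isHom (n : ℕ) : IsHom n (esym n) := by
  induction n using Nat.strong_induction_on with
  | _ n ih =>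
    match n with
    | 0 => rw [esym]; exact isHom_one
    | n + 1 =>
      rw [esym]
      refine isHom_smul _ (isHom_sum fun j hj => ?_)
      rw [Finset.mem_range] at hj
      refine isHom_congr (isHom_mul (isHom_mul (isHom_neg_one_pow j)
        (ih (n - j) (Nat.lt_succ_of_le (Nat.sub_le n j)))) (isHom_X j)) ?_
      omega

/-! ### Basic properties of `pperp` -/

lemma coeff_pperp (F : MM) (d : ℕ →₀ ℕ) :
    MvPowerSeries.coeff d (pperp F)
      = ((d 0 : ℚ) + 1) * MvPowerSeries.coeff (d + Finsupp.single 0 1) F := rfl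

lemma pperp_add (F G : MM) : pperp (F + G) = pperp F + pperp G := by
  ext d
  simp only [map_add, coeff_pperp]
  ring

lemma pperp_smul (c : ℚ) (F : MM) : pperp (c • F) = c • pperp F := by
  ext d
  simp only [MvPowerSeries.coeff_smul, coeff_pperp]
  ring

lemma pperp_zero : pperp (0 : MM) = 0 := by
  ext d; simp [coeff_pperp]

lemma pperp_one : pperp (1 : MM) = 0 := by
  ext d
  rw [coeff_pperp, coeff_one, if_neg, mul_zero, map_zero]
  intro h
  have := DFunLike.congr_fun h 0
  simp at this

lemma pperp_X (j : ℕ) : pperp (X j : MM) = if j = 0 then 1 else 0 := by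
  ext d
  rw [coeff_pperp, coeff_X]
  by_cases hj : j = 0
  · subst hj
    rw [if_pos rfl]
    by_cases hd : d = 0
    · subst hd
      simp
    · rw [if_neg, mul_zero, coeff_one, if_neg hd]
      intro h
      exact hd (by simpa using add_right_cancel (h.trans (zero_add _).symm))
  · rw [if_neg hj, if_neg, mul_zero, map_zero]
    intro h
    have := DFunLike.congr_fun h 0
    simp only [Finsupp.add_apply, Finsupp.single_apply] at this
    split_ifs at this


lemma pperp_sum {s : Finset ℕ} (F : ℕ → MM) :
    pperp (∑ j ∈ s, F j) = ∑ j ∈ s, pperp (F j) := by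
  classical
  induction s using Finset.induction_on with
  | empty => simpa using pperp_zero
  | insert _ _ h ih => rw [Finset.sum_insert h, pperp_add, ih, Finset.sum_insert h]

/-! ### The Leibniz rule for `pperp` -/

lemma pperp_aux (F G : MM) (d : ℕ →₀ ℕ) :
    ∑ p ∈ Finset.HasAntidiagonal.antidiagonal (d + Finsupp.single 0 1),
        (((p.1 : ℕ →₀ ℕ) 0 : ℚ)) * (MvPowerSeries.coeff p.1 F * MvPowerSeries.coeff p.2 G)
      = ∑ q ∈ Finset.HasAntidiagonal.antidiagonal d,
        (((q.1 : ℕ →₀ ℕ) 0 : ℚ) + 1) * (MvPowerSeries.coeff (q.1 + Finsupp.single 0 1) F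
          * MvPowerSeries.coeff q.2 G) := by
  classical
  set δ : ℕ →₀ ℕ := Finsupp.single 0 1 with hδ
  rw [← Finset.sum_filter_of_ne (p := fun p : (ℕ →₀ ℕ) × (ℕ →₀ ℕ) => p.1 0 ≠ 0)
    (by intro p _ hne h0; rw [h0] at hne; simp at hne)]
  refine Finset.sum_bij' (fun p _ => (p.1 - δ, p.2)) (fun q _ => (q.1 + δ, q.2))
    ?_ ?_ ?_ ?_ ?_
  · rintro ⟨a, b⟩ hp
    rw [Finset.mem_filter, Finset.HasAntidiagonal.mem_antidiagonal] at hp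
    obtain ⟨hab, h0⟩ := hp
    have hle : δ ≤ a := by
      rw [hδ, Finsupp.single_le_iff]
      exact Nat.one_le_iff_ne_zero.mpr h0
    rw [Finset.HasAntidiagonal.mem_antidiagonal]
    have h1 : a - δ + δ = a := tsub_add_cancel_of_le hle
    have h2 : a - δ + b + δ = d + δ := by
      rw [add_right_comm, h1]; exact hab
    exact add_right_cancel h2
  · rintro ⟨a, b⟩ hq
    rw [Finset.HasAntidiagonal.mem_antidiagonal] at hq
    rw [Finset.mem_filter, Finset.HasAntidiagonal.mem_antidiagonal]
    constructor
    · rw [add_right_comm]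
      show a + b + δ = d + δ
      rw [hq]
    · simp [hδ]
  · rintro ⟨a, b⟩ hp
    rw [Finset.mem_filter, Finset.HasAntidiagonal.mem_antidiagonal] at hp
    have hle : δ ≤ a := by
      rw [hδ, Finsupp.single_le_iff]
      exact Nat.one_le_iff_ne_zero.mpr hp.2
    simp [tsub_add_cancel_of_le hle]
  · rintro ⟨a, b⟩ _
    simp
  · rintro ⟨a, b⟩ hp
    rw [Finset.mem_filter, Finset.HasAntidiagonal.mem_antidiagonal] at hp
    obtain ⟨hab, h0⟩ := hp
    have hle : δ ≤ a := by
      rw [hδ, Finsupp.single_le_iff]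
      exact Nat.one_le_iff_ne_zero.mpr h0
    simp only [tsub_add_cancel_of_le hle]
    have h1 : (a - δ) 0 = a 0 - 1 := by
      simp [hδ, Finsupp.tsub_apply]
    rw [h1]
    congr 1
    have h2 : 1 ≤ a 0 := Nat.one_le_iff_ne_zero.mpr h0
    push_cast [Nat.cast_sub h2]
    ring

lemma sum_antidiagonal_swap' {n : ℕ →₀ ℕ} (f : (ℕ →₀ ℕ) × (ℕ →₀ ℕ) → ℚ) :
    ∑ p ∈ Finset.HasAntidiagonal.antidiagonal n, f p = ∑ p ∈ Finset.HasAntidiagonal.antidiagonal n, f p.swap :=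
  (Finset.sum_equiv (Equiv.prodComm _ _) (by simp [Finset.HasAntidiagonal.mem_antidiagonal, add_comm])
    (by intros; rfl)).symm

lemma pperp_mul (F G : MM) : pperp (F * G) = pperp F * G + F * pperp G := by
  ext d
  classical
  set δ : ℕ →₀ ℕ := Finsupp.single 0 1 with hδ
  rw [map_add, coeff_pperp, coeff_mul, coeff_mul, coeff_mul, Finset.mul_sum]
  have key : ∀ p ∈ Finset.HasAntidiagonal.antidiagonal (d + δ),
      ((d 0 : ℚ) + 1) * (MvPowerSeries.coeff p.1 F * MvPowerSeries.coeff p.2 G)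
        = (p.1 0 : ℚ) * (MvPowerSeries.coeff p.1 F * MvPowerSeries.coeff p.2 G)
          + (p.2 0 : ℚ) * (MvPowerSeries.coeff p.1 F * MvPowerSeries.coeff p.2 G) := by
    rintro ⟨a, b⟩ hp
    rw [Finset.HasAntidiagonal.mem_antidiagonal] at hp
    have h0 : a 0 + b 0 = d 0 + 1 := by
      have := DFunLike.congr_fun hp 0
      simpa [hδ] using this
    have h1 : (a 0 : ℚ) + b 0 = (d 0 : ℚ) + 1 := by exact_mod_cast h0
    rw [← h1]; ring
  rw [Finset.sum_congr rfl key, Finset.sum_add_distrib]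
  congr 1
  · rw [pperp_aux]
    refine Finset.sum_congr rfl fun q _ => ?_
    rw [coeff_pperp]; ring
  · calc ∑ p ∈ Finset.HasAntidiagonal.antidiagonal (d + δ),
          ((p.2 : ℕ →₀ ℕ) 0 : ℚ) * (MvPowerSeries.coeff p.1 F * MvPowerSeries.coeff p.2 G)
        = ∑ p ∈ Finset.HasAntidiagonal.antidiagonal (d + δ),
          ((p.1 : ℕ →₀ ℕ) 0 : ℚ) * (MvPowerSeries.coeff p.1 G * MvPowerSeries.coeff p.2 F) := by
          rw [sum_antidiagonal_swap'
            (fun p => ((p.1 : ℕ →₀ ℕ) 0 : ℚ) * (MvPowerSeries.coeff p.1 G * MvPowerSeries.coeff p.2 F))]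
          exact Finset.sum_congr rfl fun p _ => by simp only [Prod.fst_swap, Prod.snd_swap]; ring
      _ = ∑ q ∈ Finset.HasAntidiagonal.antidiagonal d,
          (((q.1 : ℕ →₀ ℕ) 0 : ℚ) + 1) * (MvPowerSeries.coeff (q.1 + δ) G * MvPowerSeries.coeff q.2 F) := pperp_aux G F d
      _ = ∑ q ∈ Finset.HasAntidiagonal.antidiagonal d,
          MvPowerSeries.coeff q.1 F * MvPowerSeries.coeff q.2 (pperp G) := by
          rw [sum_antidiagonal_swap'
            (fun q => (((q.1 : ℕ →₀ ℕ) 0 : ℚ) + 1) * (MvPowerSeries.coeff (q.1 + δ) G * MvPowerSeries.coeff q.2 F))]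
          refine Finset.sum_congr rfl fun q _ => ?_
          simp only [Prod.fst_swap, Prod.snd_swap]
          rw [coeff_pperp]; ring

/-! ### `pperp` on the elementary symmetric functions -/

lemma neg_one_pow_mul (j : ℕ) (F : MM) : (-1 : MM) ^ j * F = ((-1 : ℚ) ^ j) • F := by
  induction j generalizing F with
  | zero => simp
  | succ n ih =>
    rw [pow_succ, mul_assoc, neg_one_mul, ih (-F), pow_succ]
    rw [mul_comm ((-1:ℚ)^n) (-1), mul_smul, neg_one_smul, smul_neg]

lemma pperp_neg_one_pow (j : ℕ) : pperp ((-1 : MM) ^ j) = 0 := by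
  have : ((-1 : MM) ^ j) = ((-1 : ℚ) ^ j) • (1 : MM) := by
    rw [← neg_one_pow_mul j 1, mul_one]
  rw [this, pperp_smul, pperp_one, smul_zero]

lemma sum_newton (n : ℕ) :
    ∑ j ∈ Finset.range (n + 1), (-1 : MM) ^ j * esym (n - j) * MvPowerSeries.X j
      = ((n : ℚ) + 1) • esym (n + 1) := by
  have h : ((n : ℚ) + 1) ≠ 0 := by positivity
  rw [esym, smul_smul, mul_inv_cancel₀ h, one_smul]

lemma hsum (n : ℕ) :
    ∑ j ∈ Finset.range n, (-1 : MM) ^ j * esym (n - 1 - j) * MvPowerSeries.X j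
      = (n : ℚ) • esym n := by
  cases n with
  | zero => simp
  | succ m =>
    simp only [Nat.add_sub_cancel]
    rw [sum_newton m]
    norm_cast

lemma pperp_esym (n : ℕ) : pperp (esym n) = if n = 0 then 0 else esym (n - 1) := by
  induction n using Nat.strong_induction_on with
  | _ n ih =>
    match n with
    | 0 => rw [esym]; exact pperp_one
    | n + 1 =>
      rw [esym, if_neg (Nat.succ_ne_zero n), pperp_smul, pperp_sum]
      have hterm : ∀ j ∈ Finset.range (n + 1),
          pperp ((-1 : MM) ^ j * esym (n - j) * MvPowerSeries.X j)
            = (-1 : MM) ^ j * (if n - j = 0 then 0 else esym (n - j - 1)) * MvPowerSeries.X j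
              + (if j = 0 then esym n else 0) := by
        intro j hj
        rw [Finset.mem_range] at hj
        rw [pperp_mul, pperp_mul, pperp_neg_one_pow, pperp_X,
          ih (n - j) (Nat.lt_succ_of_le (Nat.sub_le n j))]
        by_cases hj0 : j = 0
        · subst hj0
          simp
        · rw [if_neg hj0, if_neg hj0]; ring
      rw [Finset.sum_congr rfl hterm, Finset.sum_add_distrib]
      have h2 : ∑ j ∈ Finset.range (n + 1), (if j = 0 then esym n else 0) = esym n := by
        simp
      have h3 : ∑ j ∈ Finset.range (n + 1),
          (-1 : MM) ^ j * (if n - j = 0 then 0 else esym (n - j - 1)) * MvPowerSeries.X j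
            = (n : ℚ) • esym n := by
        rw [Finset.sum_range_succ, Nat.sub_self, if_pos rfl, mul_zero, zero_mul, add_zero]
        rw [← hsum n]
        refine Finset.sum_congr rfl fun j hj => ?_
        rw [Finset.mem_range] at hj
        rw [if_neg (by omega), show n - j - 1 = n - 1 - j from by omega]
      rw [h2, h3, Nat.add_sub_cancel, smul_add, smul_smul, ← add_smul]
      have h : ((n : ℚ) + 1) ≠ 0 := by positivity
      rw [show ((n:ℚ)+1)⁻¹ * (n:ℚ) + ((n:ℚ)+1)⁻¹ = 1 from by field_simp, one_smul]

lemma pperp_esymZ (k : ℤ) : pperp (esymZ k) = esymZ (k - 1) := by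
  unfold esymZ
  by_cases hk : 0 ≤ k
  · rw [if_pos hk, pperp_esym]
    by_cases h0 : k = 0
    · subst h0
      simp
    · rw [if_neg (show ¬ k.toNat = 0 by omega), if_pos (show (0:ℤ) ≤ k - 1 by omega),
        show k.toNat - 1 = (k - 1).toNat from by omega]
  · rw [if_neg hk, pperp_zero, if_neg (show ¬ (0:ℤ) ≤ k - 1 by omega)]

/-! ### `pperp` on `fSym` -/

lemma coeff_fSym (r : ℤ) (d : ℕ →₀ ℕ) :
    MvPowerSeries.coeff d (fSym r)
      = ∑ n ∈ Finset.range (psWeight d + 1),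
          MvPowerSeries.coeff d (esymZ n * esymZ (n + r)) := rfl

lemma coeff_esymZ_mul (d : ℕ →₀ ℕ) (k : ℤ) (Q : MM) (h : (psWeight d : ℤ) < k) :
    MvPowerSeries.coeff d (esymZ k * Q) = 0 := by
  have hk : 0 ≤ k := le_trans (Int.natCast_nonneg _) h.le
  rw [esymZ, if_pos hk, coeff_mul]
  refine Finset.sum_eq_zero fun p hp => ?_
  rw [Finset.HasAntidiagonal.mem_antidiagonal] at hp
  have h1 : psWeight p.1 ≤ psWeight d := by
    rw [← hp, psWeight_add]; omega
  have h2 : psWeight p.1 ≠ k.toNat := by omega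
  rw [esym_isHom _ _ h2, zero_mul]

lemma pperp_fSym (i : ℤ) : pperp (fSym i) = fSym (i - 1) + fSym (i + 1) := by
  ext d
  set δ : ℕ →₀ ℕ := Finsupp.single 0 1 with hδ
  set W : ℕ := psWeight d with hW
  have hWδ : psWeight (d + δ) = W + 1 := by
    rw [psWeight_add, hδ, psWeight_single]
  rw [map_add, coeff_pperp, coeff_fSym, coeff_fSym, coeff_fSym, hWδ, Finset.mul_sum]
  have key : ∀ n ∈ Finset.range (W + 1 + 1),
      ((d 0 : ℚ) + 1) * MvPowerSeries.coeff (d + δ) (esymZ n * esymZ (n + i))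
        = MvPowerSeries.coeff d (esymZ ((n : ℤ) - 1) * esymZ (n + i))
          + MvPowerSeries.coeff d (esymZ n * esymZ ((n : ℤ) + i - 1)) := by
    intro n _
    rw [← coeff_pperp, pperp_mul, map_add, pperp_esymZ, pperp_esymZ]
  rw [Finset.sum_congr rfl key, Finset.sum_add_distrib]
  have hA : ∑ n ∈ Finset.range (W + 1 + 1),
      MvPowerSeries.coeff d (esymZ ((n : ℤ) - 1) * esymZ ((n : ℤ) + i))
        = ∑ n ∈ Finset.range (W + 1),
          MvPowerSeries.coeff d (esymZ n * esymZ ((n : ℤ) + (i + 1))) := by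
    rw [Finset.sum_range_succ'
      (fun n => MvPowerSeries.coeff d (esymZ ((n : ℤ) - 1) * esymZ ((n : ℤ) + i))) (W + 1)]
    have h0 : MvPowerSeries.coeff d (esymZ (((0:ℕ) : ℤ) - 1) * esymZ (((0:ℕ) : ℤ) + i)) = 0 := by
      rw [show (((0:ℕ):ℤ) - 1) = (-1 : ℤ) by norm_num, esymZ, if_neg (by norm_num), zero_mul,
        map_zero]
    rw [h0, add_zero]
    refine Finset.sum_congr rfl fun n _ => ?_
    rw [show ((n + 1 : ℕ) : ℤ) - 1 = (n : ℤ) by push_cast; ring,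
      show ((n + 1 : ℕ) : ℤ) + i = (n : ℤ) + (i + 1) by push_cast; ring]
  have hB : ∑ n ∈ Finset.range (W + 1 + 1),
      MvPowerSeries.coeff d (esymZ n * esymZ ((n : ℤ) + i - 1))
        = ∑ n ∈ Finset.range (W + 1),
          MvPowerSeries.coeff d (esymZ n * esymZ ((n : ℤ) + (i - 1))) := by
    rw [Finset.sum_range_succ]
    rw [coeff_esymZ_mul d _ _ (by push_cast; omega), add_zero]
    refine Finset.sum_congr rfl fun n _ => ?_
    rw [show ((n : ℤ)) + i - 1 = (n : ℤ) + (i - 1) by ring]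
  rw [hA, hB]
  exact add_comm _ _

/-! ### The main theorem -/

noncomputable def pperpL : MM →ₗ[ℚ] MM :=
  { toFun := pperp, map_add' := pperp_add, map_smul' := pperp_smul }

lemma pperp_iterate (j : ℕ) (x : MM) : pperp^[j] x = (pperpL ^ j) x :=
  (Module.End.pow_apply pperpL j x).symm

lemma pascal_sum {N : Type*} [AddCommMonoid N] [Module ℚ N] (g : ℕ → N) (j : ℕ) :
    ∑ r ∈ Finset.range (j + 1), (j.choose r : ℚ) • g r
      + ∑ r ∈ Finset.range (j + 1), (j.choose r : ℚ) • g (r + 1)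
      = ∑ r ∈ Finset.range (j + 2), ((j + 1).choose r : ℚ) • g r := by
  rw [Finset.sum_range_succ' (fun r => (((j + 1).choose r : ℚ)) • g r) (j + 1)]
  simp only [Nat.choose_succ_succ, Nat.cast_add, add_smul, Nat.choose_zero_right, Nat.cast_one,
    one_smul]
  rw [Finset.sum_add_distrib]
  have h2 : ∑ r ∈ Finset.range (j + 1), (j.choose (r + 1) : ℚ) • g (r + 1)
      = ∑ r ∈ Finset.range j, (j.choose (r + 1) : ℚ) • g (r + 1) := by
    rw [Finset.sum_range_succ, Nat.choose_succ_self]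
    simp
  have h3 : ∑ r ∈ Finset.range (j + 1), (j.choose r : ℚ) • g r
      = ∑ r ∈ Finset.range j, (j.choose (r + 1) : ℚ) • g (r + 1) + (j.choose 0 : ℚ) • g 0 :=
    Finset.sum_range_succ' _ j
  rw [h2, h3]
  simp only [Nat.choose_zero_right, Nat.cast_one, one_smul]
  abel

/-- **Lemma (powers of the skewing operator on `f`).** -/
theorem pperp_pow_fSym (i : ℤ) (j : ℕ) :
    pperp^[j] (fSym i) =
      ∑ r ∈ Finset.range (j + 1), (j.choose r : ℚ) • fSym (i - j + 2 * r) := by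
  induction j generalizing i with
  | zero =>
    rw [Function.iterate_zero_apply, Finset.sum_range_one, Nat.choose_self, Nat.cast_one,
      one_smul]
    norm_num
  | succ j ih =>
    rw [Function.iterate_succ_apply, pperp_fSym, pperp_iterate, map_add, ← pperp_iterate,
      ← pperp_iterate, ih (i - 1), ih (i + 1)]
    set g : ℕ → MvPowerSeries ℕ ℚ := fun r => fSym (i - ((j : ℤ) + 1) + 2 * r) with hg
    have e1 : ∑ r ∈ Finset.range (j + 1), (j.choose r : ℚ) • fSym (i - 1 - j + 2 * r)
        = ∑ r ∈ Finset.range (j + 1), (j.choose r : ℚ) • g r := by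
      refine Finset.sum_congr rfl fun r _ => ?_
      simp only [hg]
      rw [show i - 1 - (j : ℤ) + 2 * r = i - ((j : ℤ) + 1) + 2 * r by ring]
    have e2 : ∑ r ∈ Finset.range (j + 1), (j.choose r : ℚ) • fSym (i + 1 - j + 2 * r)
        = ∑ r ∈ Finset.range (j + 1), (j.choose r : ℚ) • g (r + 1) := by
      refine Finset.sum_congr rfl fun r _ => ?_
      simp only [hg]
      rw [show ((r + 1 : ℕ) : ℤ) = (r : ℤ) + 1 by push_cast; ring,
        show i + 1 - (j : ℤ) + 2 * r = i - ((j : ℤ) + 1) + 2 * ((r : ℤ) + 1) by ring]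
    rw [e1, e2, pascal_sum g j]
    refine Finset.sum_congr rfl fun r _ => ?_
    simp only [hg]
    rw [show i - ((j : ℤ) + 1) + 2 * r = i - ((j + 1 : ℕ) : ℤ) + 2 * r by push_cast; ring]
end

section
/- Let θ : Λ → ℚ[[x]] be the ring homomorphism with θ(p_1) = x and θ(p_n) = 0 for n > 1, and let f_r = ∑_{n ≥ 0} e_n e_{n+r} for r ∈ ℤ (with e_m = 0 for m < 0). Then θ(f_r) = ∑_{k ≥ 0} binom(|r| + 2k, k) x^{|r| + 2k} / (|r| + 2k)!, i.e. θ(f_r) is the modified Bessel function I_{|r|}(2x). -/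
/-- The ring homomorphism `θ : Λ̂ → ℚ[[x]]` determined by `θ(p₁) = x` and
`θ(pₙ) = 0` for `n > 1`, realized coefficientwise in the power-sum model:
the coefficient of `x^m` in `θ F` is the coefficient of `p₁^m` in `F`. -/
noncomputable def theta (F : MvPowerSeries ℕ ℚ) : PowerSeries ℚ :=
  PowerSeries.mk fun m => MvPowerSeries.coeff (Finsupp.single 0 m) F

open MvPowerSeries Finsupp


lemma coeff_mul_X (F : MvPowerSeries ℕ ℚ) (j a : ℕ) :
    MvPowerSeries.coeff (single 0 a) (F * MvPowerSeries.X j) =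
      if j = 0 ∧ 1 ≤ a then MvPowerSeries.coeff (single 0 (a-1)) F else 0 := by
  rw [X_def, coeff_mul_monomial, mul_one]
  have hle : single j 1 ≤ single 0 a ↔ j = 0 ∧ 1 ≤ a := by
    rw [single_le_iff]
    rcases eq_or_ne j 0 with h | h
    · subst h; simp
    · simp [single_eq_of_ne (Ne.symm h), h]
  by_cases h : j = 0 ∧ 1 ≤ a
  · rw [if_pos (hle.mpr h), if_pos h, h.1, ← single_tsub]
  · rw [if_neg (fun hc => h (hle.mp hc)), if_neg h]

lemma coeff_esym (n a : ℕ) :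
    MvPowerSeries.coeff (single 0 a) (esym n) =
      if a = n then (1 : ℚ) / n.factorial else 0 := by
  induction n generalizing a with
  | zero =>
    rw [esym]
    rcases eq_or_ne a 0 with h | h
    · subst h; simp
    · rw [if_neg h]
      simpa [MvPowerSeries.coeff_one, single_eq_zero] using h
  | succ n ih =>
    rw [esym, map_smul, map_sum]
    have key : ∀ j ∈ Finset.range (n + 1),
        MvPowerSeries.coeff (single 0 a)
          ((-1 : MvPowerSeries ℕ ℚ) ^ j * esym (n - j) * MvPowerSeries.X j) =
        if j = 0 then (if 1 ≤ a then MvPowerSeries.coeff (single 0 (a-1)) (esym n) else 0)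
        else 0 := by
      intro j _
      rw [coeff_mul_X]
      rcases eq_or_ne j 0 with h | h
      · subst h
        by_cases h1 : 1 ≤ a <;> simp [h1]
      · simp [h]
    rw [Finset.sum_congr rfl key, Finset.sum_ite_eq' (Finset.range (n+1)) 0]
    rw [if_pos (Finset.mem_range.mpr (Nat.succ_pos n))]
    rcases Nat.eq_zero_or_pos a with h | h
    · subst h; simp
    · rw [if_pos (show 1 ≤ a from h), ih]
      rcases eq_or_ne (a - 1) n with h2 | h2
      · rw [if_pos h2, if_pos (by omega), smul_eq_mul, Nat.factorial_succ]
        have : ((n:ℚ) + 1) ≠ 0 := by positivity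
        push_cast
        field_simp
      · rw [if_neg h2, if_neg (by omega), smul_eq_mul, mul_zero]

lemma coeff_esym_mul (n k m : ℕ) :
    MvPowerSeries.coeff (single 0 m) (esym n * esym k) =
      if n + k = m then (1 : ℚ) / (n.factorial * k.factorial) else 0 := by
  classical
  rw [coeff_mul, Finsupp.antidiagonal_single, Finset.sum_map]
  have key : ∀ p ∈ Finset.HasAntidiagonal.antidiagonal m,
      MvPowerSeries.coeff (single 0 p.1) (esym n) *
        MvPowerSeries.coeff (single 0 p.2) (esym k) =
      if p = (n, k) then (1 : ℚ) / (n.factorial * k.factorial) else 0 := by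
    intro p _
    rw [coeff_esym, coeff_esym]
    rcases eq_or_ne p (n, k) with h | h
    · subst h; simp [div_mul_div_comm, mul_comm]
    · rw [if_neg h]
      rcases eq_or_ne p.1 n with h1 | h1
      · have h2 : p.2 ≠ k := fun hc => h (Prod.ext h1 hc)
        rw [if_neg h2, mul_zero]
      · rw [if_neg h1, zero_mul]
  calc (∑ p ∈ Finset.HasAntidiagonal.antidiagonal m,
        MvPowerSeries.coeff (single 0 p.1) (esym n) *
          MvPowerSeries.coeff (single 0 p.2) (esym k))
      = ∑ p ∈ Finset.HasAntidiagonal.antidiagonal m,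
          (if p = (n, k) then (1 : ℚ) / (n.factorial * k.factorial) else 0) :=
        Finset.sum_congr rfl key
    _ = _ := by
        rw [Finset.sum_ite_eq' (Finset.HasAntidiagonal.antidiagonal m) (n, k)]
        simp [Finset.mem_antidiagonal]


/-- `θ(f_r) = ∑_{k ≥ 0} binom(|r|+2k, k) x^{|r|+2k}/(|r|+2k)!`, i.e. `θ(f_r)` is
the modified Bessel function `I_{|r|}(2x)`: the coefficient of `x^m` is
`binom(m, (m-|r|)/2)/m!` when `m ≥ |r|` and `m - |r|` is even, and `0` otherwise. -/
theorem theta_fSym (r : ℤ) :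
    theta (fSym r) = PowerSeries.mk fun m =>
      if r.natAbs ≤ m ∧ (m - r.natAbs) % 2 = 0 then
        (m.choose ((m - r.natAbs) / 2) : ℚ) / m.factorial
      else 0 := by
  unfold theta
  ext m
  rw [PowerSeries.coeff_mk, PowerSeries.coeff_mk]
  have hw : psWeight (single 0 m) = m := by
    simp [psWeight, Finsupp.sum_single_index]
  have hcoeff : MvPowerSeries.coeff (single 0 m) (fSym r) =
      ∑ n ∈ Finset.range (m + 1),
        MvPowerSeries.coeff (single 0 m) (esymZ n * esymZ (n + r)) := by
    rw [MvPowerSeries.coeff_apply]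
    show fSym r (single 0 m) = _
    rw [fSym, hw]
  rw [hcoeff]
  -- summand formula
  have hsummand : ∀ n : ℕ,
      MvPowerSeries.coeff (single 0 m) (esymZ n * esymZ (n + r)) =
      if 0 ≤ (n : ℤ) + r ∧ n + ((n : ℤ) + r).toNat = m then
        (1 : ℚ) / (n.factorial * (((n : ℤ) + r).toNat).factorial) else 0 := by
    intro n
    by_cases h : 0 ≤ (n : ℤ) + r
    · rw [esymZ, if_pos (by exact_mod_cast Int.ofNat_nonneg n), esymZ, if_pos h,
        Int.toNat_natCast, coeff_esym_mul]
      by_cases h2 : n + ((n : ℤ) + r).toNat = m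
      · rw [if_pos h2, if_pos ⟨h, h2⟩]
      · rw [if_neg h2, if_neg (fun hc => h2 hc.2)]
    · rw [esymZ, esymZ, if_neg h, mul_zero, map_zero,
        if_neg (fun hc => h hc.1)]
  rw [Finset.sum_congr rfl fun n _ => hsummand n]
  by_cases hC : r.natAbs ≤ m ∧ (m - r.natAbs) % 2 = 0
  · rw [if_pos hC]
    obtain ⟨hle, hpar⟩ := hC
    set k := (m - r.natAbs) / 2 with hk
    have hk2 : 2 * k = m - r.natAbs := by omega
    set n₀ : ℕ := if 0 ≤ r then k else k + r.natAbs with hn₀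
    have hmain : (n₀ : ℤ) + ((n₀ : ℤ) + r) = m ∧ 0 ≤ (n₀ : ℤ) + r := by
      rcases le_or_gt 0 r with hr | hr
      · have : r = (r.natAbs : ℤ) := (Int.natAbs_of_nonneg hr).symm
        constructor <;> [skip; skip] <;> (simp only [hn₀, if_pos hr]; omega)
      · have : r = -(r.natAbs : ℤ) := by
          rw [Int.ofNat_natAbs_of_nonpos hr.le]; ring
        constructor <;> (simp only [hn₀, if_neg (not_le.mpr hr)]; omega)
    have hn₀le : n₀ ≤ m := by omega
    rw [Finset.sum_eq_single n₀]
    · rw [if_pos ⟨hmain.2, by omega⟩]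
      have htn : ((n₀ : ℤ) + r).toNat = m - n₀ := by omega
      rw [htn]
      have hfac : (n₀.factorial : ℚ) * ((m - n₀).factorial : ℚ)
          = (k.factorial : ℚ) * ((m - k).factorial : ℚ) := by
        rcases le_or_gt 0 r with hr | hr
        · simp only [hn₀, if_pos hr]
        · have hmn : m - n₀ = k := by
            simp only [hn₀, if_neg (not_le.mpr hr)] at hn₀le ⊢; omega
          have hn' : n₀ = m - k := by omega
          rw [hmn, hn']; ring
      rw [hfac, Nat.cast_choose ℚ (by omega : k ≤ m)]
      have h1 : (k.factorial : ℚ) ≠ 0 := Nat.cast_ne_zero.mpr k.factorial_ne_zero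
      have h2 : ((m - k).factorial : ℚ) ≠ 0 := Nat.cast_ne_zero.mpr (m - k).factorial_ne_zero
      have h3 : (m.factorial : ℚ) ≠ 0 := Nat.cast_ne_zero.mpr m.factorial_ne_zero
      field_simp
    · intro n _ hne
      rw [if_neg]
      rintro ⟨hpos, heq⟩
      apply hne
      omega
    · intro habs
      exact absurd (Finset.mem_range.mpr (by omega)) habs
  · rw [if_neg hC]
    apply Finset.sum_eq_zero
    intro n hn
    rw [if_neg]
    rintro ⟨hpos, heq⟩
    apply hC
    constructor <;> omega
end

section
/- For any even bound: the number of standard Young tableaux with n cells and at most 2 columns equals the number of lattice walks of length n on the nonnegative integers starting and ending at 0, with steps +1, -1, 0, where the 0 step may only be used at position 0. (This is the w = 1 case of the Eu–Fu–Hou–Hsu theorem; both sides equal the Motzkin-like count, in fact the central binomial-related Riordan dual.) -/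
/-- A standard Young tableau of size `n`: a filling of the cells of a Young
diagram with `n` cells by the entries `1, …, n`, each appearing exactly once,
strictly increasing along rows and columns (entries outside the diagram are `0`). -/
structure SYT (n : ℕ) where
  shape : YoungDiagram
  entry : ℕ → ℕ → ℕ
  card_shape : shape.cells.card = n
  row_strict : ∀ i j1 j2 : ℕ, j1 < j2 → (i, j2) ∈ shape → entry i j1 < entry i j2
  col_strict : ∀ i1 i2 j : ℕ, i1 < i2 → (i2, j) ∈ shape → entry i1 j < entry i2 j
  zeros : ∀ i j : ℕ, (i, j) ∉ shape → entry i j = 0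
  bij : ∀ m : ℕ, 1 ≤ m → m ≤ n → ∃! c : ℕ × ℕ, c ∈ shape ∧ entry c.1 c.2 = m

/-- The width of a standard Young tableau: the number of columns of its shape,
i.e. the length of its first row. -/
def SYT.width {n : ℕ} (T : SYT n) : ℕ := T.shape.rowLen 0

namespace SYTWalks

open Finset

variable {n : ℕ}

/-- number of letters equal to `b` among the first `k` letters of `w` -/
def cnt (w : Fin n → Bool) (b : Bool) (k : ℕ) : ℕ :=
  (univ.filter (fun i : Fin n => (i : ℕ) < k ∧ w i = b)).card

/-- ballot condition: every prefix has at least as many `true`s as `false`s -/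
def IsBallot (w : Fin n → Bool) : Prop := ∀ k, cnt w false k ≤ cnt w true k

/-- ballot words -/
abbrev BW (n : ℕ) := {w : Fin n → Bool // IsBallot w}

instance : Finite (BW n) := Subtype.finite

lemma cnt_zero (w : Fin n → Bool) (b : Bool) : cnt w b 0 = 0 := by
  simp [cnt]

lemma cnt_succ (w : Fin n → Bool) (b : Bool) (k : ℕ) :
    cnt w b (k + 1) = cnt w b k + (if h : k < n then (if w ⟨k, h⟩ = b then 1 else 0) else 0) := by
  classical
  unfold cnt
  rw [Finset.card_filter, Finset.card_filter]
  have : ∀ i : Fin n, (if (i : ℕ) < k + 1 ∧ w i = b then 1 else 0) =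
      (if (i : ℕ) < k ∧ w i = b then 1 else 0) + (if (i : ℕ) = k ∧ w i = b then (1:ℕ) else 0) := by
    intro i
    by_cases hw : w i = b <;> simp [hw] <;> split_ifs <;> omega
  rw [Finset.sum_congr rfl (fun i _ => this i), Finset.sum_add_distrib]
  congr 1
  by_cases h : k < n
  · rw [dif_pos h]
    rw [Finset.sum_eq_single (⟨k, h⟩ : Fin n)]
    · simp
    · intro i _ hne
      have : (i : ℕ) ≠ k := fun hh => hne (Fin.ext hh)
      simp [this]
    · simp
  · rw [dif_neg h]
    apply Finset.sum_eq_zero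
    intro i _
    have : (i : ℕ) ≠ k := by omega
    simp [this]

lemma cnt_stable (w : Fin n → Bool) (b : Bool) {k : ℕ} (hk : n ≤ k) : cnt w b k = cnt w b n := by
  unfold cnt
  congr 1
  apply Finset.filter_congr
  intro i _
  have := i.isLt
  constructor <;> intro h <;> exact ⟨by omega, h.2⟩


abbrev Walk (n : ℕ) := {x : Fin (n + 1) → ℕ //
        x 0 = 0 ∧ x (Fin.last n) = 0 ∧
        ∀ i : Fin n,
          ((x i.succ : ℤ) - (x i.castSucc : ℤ) = 1 ∨
            (x i.succ : ℤ) - (x i.castSucc : ℤ) = -1 ∨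
            (x i.succ = x i.castSucc ∧ x i.castSucc = 0))}

/-- A proof-free accessor for a walk. -/
def xval (x : Fin (n + 1) → ℕ) (k : ℕ) : ℕ :=
  if h : k < n + 1 then x ⟨k, h⟩ else 0

lemma xval_eq (x : Fin (n + 1) → ℕ) (i : Fin (n + 1)) : xval x i.val = x i := by
  rw [xval, dif_pos i.isLt]

lemma xval_zero (x : Walk n) : xval x.1 0 = 0 := by
  have h := xval_eq x.1 0
  simp only [Fin.val_zero] at h
  rw [h, x.2.1]

lemma xval_last (x : Walk n) : xval x.1 n = 0 := by
  have h := xval_eq x.1 (Fin.last n)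
  simp only [Fin.val_last] at h
  rw [h, x.2.2.1]

/-! ### Walk to word -/

def wordOfWalk (x : Fin (n + 1) → ℕ) : Fin n → Bool :=
  fun i => decide (x i.castSucc ≤ x i.succ)

lemma wordOfWalk_eq (x : Fin (n + 1) → ℕ) (i : Fin n) :
    wordOfWalk x i = decide (xval x i.val ≤ xval x (i.val + 1)) := by
  have h1 := xval_eq x i.castSucc
  have h2 := xval_eq x i.succ
  rw [Fin.coe_castSucc] at h1
  rw [Fin.val_succ] at h2
  rw [wordOfWalk, h1, h2]

lemma walk_step_det (x : Walk n) (k : ℕ) (hk : k < n) :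
    xval x.1 k = (if wordOfWalk x.1 ⟨k, hk⟩ then xval x.1 (k + 1) - 1 else xval x.1 (k + 1) + 1) := by
  have h1 : xval x.1 k = x.1 (Fin.castSucc ⟨k, hk⟩) := by
    have := xval_eq x.1 (Fin.castSucc ⟨k, hk⟩)
    rwa [Fin.coe_castSucc] at this
  have h2 : xval x.1 (k + 1) = x.1 (Fin.succ ⟨k, hk⟩) := by
    have := xval_eq x.1 (Fin.succ ⟨k, hk⟩)
    rwa [Fin.val_succ] at this
  have hword := wordOfWalk_eq x.1 (⟨k, hk⟩ : Fin n)
  have h := x.2.2.2 ⟨k, hk⟩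
  rw [← h1, ← h2] at h
  rcases h with h | h | h
  · have hle : xval x.1 k ≤ xval x.1 (k + 1) := by omega
    have hb : wordOfWalk x.1 ⟨k, hk⟩ = true := by
      rw [hword]; exact decide_eq_true hle
    rw [hb, if_pos rfl]
    omega
  · have hle : ¬ (xval x.1 k ≤ xval x.1 (k + 1)) := by omega
    have hb : wordOfWalk x.1 ⟨k, hk⟩ = false := by
      rw [hword]; exact decide_eq_false hle
    rw [hb, if_neg (by simp)]
    omega
  · have hle : xval x.1 k ≤ xval x.1 (k + 1) := by omega
    have hb : wordOfWalk x.1 ⟨k, hk⟩ = true := by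
      rw [hword]; exact decide_eq_true hle
    rw [hb, if_pos rfl]
    omega

lemma ballot_aux (x : Walk n) : ∀ k, k ≤ n →
    cnt (wordOfWalk x.1) false k + xval x.1 k ≤ cnt (wordOfWalk x.1) true k := by
  intro k
  induction k with
  | zero => intro _; rw [cnt_zero, cnt_zero, xval_zero]
  | succ k ih =>
    intro hk
    have hkn : k < n := hk
    have ihh := ih (le_of_lt hkn)
    rw [cnt_succ, cnt_succ, dif_pos hkn, dif_pos hkn]
    have hstep := walk_step_det x k hkn
    cases hw : wordOfWalk x.1 ⟨k, hkn⟩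
    · rw [hw, if_neg (by simp)] at hstep
      rw [if_pos rfl, if_neg (by simp)]
      omega
    · rw [hw, if_pos rfl] at hstep
      rw [if_neg (by simp), if_pos rfl]
      omega

lemma wordOfWalk_isBallot (x : Walk n) : IsBallot (wordOfWalk x.1) := by
  intro k
  rcases le_or_gt k n with h | h
  · have := ballot_aux x k h
    omega
  · rw [cnt_stable _ _ (le_of_lt h), cnt_stable _ _ (le_of_lt h)]
    have := ballot_aux x n le_rfl
    omega

def walkToWord (x : Walk n) : BW n := ⟨wordOfWalk x.1, wordOfWalk_isBallot x⟩

lemma walkToWord_injective : Function.Injective (walkToWord (n := n)) := by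
  intro x y hxy
  have hw : wordOfWalk x.1 = wordOfWalk y.1 := congrArg Subtype.val hxy
  apply Subtype.ext
  suffices h : ∀ d, xval x.1 (n - d) = xval y.1 (n - d) by
    funext k
    have := h (n - k.val)
    have hnk : n - (n - k.val) = k.val := by omega
    rw [hnk] at this
    rw [← xval_eq x.1 k, ← xval_eq y.1 k, this]
  intro d
  induction d with
  | zero => simp only [Nat.sub_zero, xval_last]
  | succ d ih =>
    rcases Nat.eq_zero_or_pos (n - d) with h0 | hpos
    · rw [show n - (d+1) = n - d by omega]
      exact ih
    · have hmn : n - (d + 1) < n := by omega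
      have hx := walk_step_det x (n - (d+1)) hmn
      have hy := walk_step_det y (n - (d+1)) hmn
      have hnd : n - (d + 1) + 1 = n - d := by omega
      rw [hnd] at hx hy
      rw [hx, hy, hw, ih]

/-! ### Word to walk -/

/-- height of the path of the word after `k` steps -/
def hgt (w : Fin n → Bool) (k : ℕ) : ℤ := (cnt w true k : ℤ) - (cnt w false k : ℤ)

/-- minimum of `hgt` over `[k, n]` (where `k ≤ n`). -/
def mlow (w : Fin n → Bool) (k : ℕ) : ℤ :=
  (insert n (Finset.Icc k n)).inf' (Finset.insert_nonempty _ _) (hgt w)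

lemma hgt_zero (w : Fin n → Bool) : hgt w 0 = 0 := by simp [hgt, cnt_zero]

lemma hgt_succ (w : Fin n → Bool) {k : ℕ} (hk : k < n) :
    hgt w (k + 1) = hgt w k + (if w ⟨k, hk⟩ then 1 else -1) := by
  unfold hgt
  rw [cnt_succ, cnt_succ, dif_pos hk, dif_pos hk]
  cases hw : w ⟨k, hk⟩
  · rw [if_pos rfl, if_neg (by simp), if_neg (by simp)]
    push_cast; ring
  · rw [if_pos rfl, if_neg (by simp), if_pos rfl]
    push_cast; ring

lemma hgt_nonneg {w : Fin n → Bool} (hw : IsBallot w) (k : ℕ) : 0 ≤ hgt w k := by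
  have := hw k
  unfold hgt
  omega

lemma mlow_le {w : Fin n → Bool} {k : ℕ} (hk : k ≤ n) : mlow w k ≤ hgt w k := by
  apply Finset.inf'_le
  rw [Finset.mem_insert, Finset.mem_Icc]
  omega

lemma mlow_nonneg {w : Fin n → Bool} (hw : IsBallot w) (k : ℕ) : 0 ≤ mlow w k := by
  apply Finset.le_inf'
  intro j _
  exact hgt_nonneg hw j

lemma mlow_zero {w : Fin n → Bool} (hw : IsBallot w) : mlow w 0 = 0 :=
  le_antisymm (by simpa [hgt_zero] using mlow_le (Nat.zero_le n)) (mlow_nonneg hw 0)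

lemma mlow_last (w : Fin n → Bool) : mlow w n = hgt w n := by
  apply le_antisymm (mlow_le le_rfl)
  apply Finset.le_inf'
  intro j hj
  rw [Finset.mem_insert, Finset.mem_Icc] at hj
  have : j = n := by omega
  rw [this]

lemma mlow_succ {w : Fin n → Bool} {k : ℕ} (hk : k < n) :
    mlow w k = min (hgt w k) (mlow w (k + 1)) := by
  apply le_antisymm
  · apply le_min (mlow_le (le_of_lt hk))
    apply Finset.le_inf'
    intro j hj
    apply Finset.inf'_le
    rw [Finset.mem_insert, Finset.mem_Icc] at hj ⊢
    omega
  · apply Finset.le_inf'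
    intro j hj
    rw [Finset.mem_insert, Finset.mem_Icc] at hj
    rcases eq_or_ne j k with rfl | hne
    · exact min_le_left _ _
    · refine le_trans (min_le_right _ _) (Finset.inf'_le _ ?_)
      rw [Finset.mem_insert, Finset.mem_Icc]
      omega

def walkOfWord (w : BW n) : Fin (n + 1) → ℕ :=
  fun k => (hgt w.1 k.val - mlow w.1 k.val).toNat

lemma walkOfWord_isWalk (w : BW n) :
    walkOfWord w 0 = 0 ∧ walkOfWord w (Fin.last n) = 0 ∧
        ∀ i : Fin n,
          ((walkOfWord w i.succ : ℤ) - (walkOfWord w i.castSucc : ℤ) = 1 ∨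
            (walkOfWord w i.succ : ℤ) - (walkOfWord w i.castSucc : ℤ) = -1 ∨
            (walkOfWord w i.succ = walkOfWord w i.castSucc ∧ walkOfWord w i.castSucc = 0)) := by
  refine ⟨?_, ?_, ?_⟩
  · show (hgt w.1 (0 : Fin (n+1)).val - mlow w.1 (0 : Fin (n+1)).val).toNat = 0
    rw [Fin.val_zero, hgt_zero, mlow_zero w.2]
    rfl
  · show (hgt w.1 (Fin.last n).val - mlow w.1 (Fin.last n).val).toNat = 0
    rw [Fin.val_last, mlow_last]
    simp
  · intro i
    have hk : i.val < n := i.isLt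
    have e1 : walkOfWord w i.succ = (hgt w.1 (i.val + 1) - mlow w.1 (i.val + 1)).toNat := by
      show (hgt w.1 i.succ.val - mlow w.1 i.succ.val).toNat = _
      rw [Fin.val_succ]
    have e2 : walkOfWord w i.castSucc = (hgt w.1 i.val - mlow w.1 i.val).toNat := by
      show (hgt w.1 i.castSucc.val - mlow w.1 i.castSucc.val).toNat = _
      rw [Fin.coe_castSucc]
    rw [e1, e2]
    have hstep := hgt_succ w.1 hk
    have hmin := mlow_succ (w := w.1) hk
    have hm1 : mlow w.1 (i.val + 1) ≤ hgt w.1 (i.val + 1) := mlow_le (by omega)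
    have hnn : 0 ≤ mlow w.1 i.val := mlow_nonneg w.2 i.val
    have hnn1 : 0 ≤ mlow w.1 (i.val + 1) := mlow_nonneg w.2 (i.val + 1)
    cases hw : w.1 ⟨i.val, hk⟩
    · rw [hw, if_neg (by simp)] at hstep
      omega
    · rw [hw, if_pos rfl] at hstep
      omega

def wordToWalk (w : BW n) : Walk n := ⟨walkOfWord w, walkOfWord_isWalk w⟩

lemma wordToWalk_injective : Function.Injective (wordToWalk (n := n)) := by
  intro w w' h
  have hx : walkOfWord w = walkOfWord w' := congrArg Subtype.val h
  apply Subtype.ext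
  funext i
  have hk : i.val < n := i.isLt
  -- recover the letter from the walk
  have key : ∀ v : BW n, v.1 i =
      decide (walkOfWord v (Fin.castSucc i) ≤ walkOfWord v (Fin.succ i)) := by
    intro v
    have e1 : (walkOfWord v i.succ : ℤ) = hgt v.1 (i.val + 1) - mlow v.1 (i.val + 1) := by
      show ((hgt v.1 i.succ.val - mlow v.1 i.succ.val).toNat : ℤ) = _
      rw [Fin.val_succ, Int.toNat_of_nonneg (by linarith [mlow_le (n := n) (w := v.1) (k := i.val + 1) (by omega)])]
    have e2 : (walkOfWord v i.castSucc : ℤ) = hgt v.1 i.val - mlow v.1 i.val := by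
      show ((hgt v.1 i.castSucc.val - mlow v.1 i.castSucc.val).toNat : ℤ) = _
      rw [Fin.coe_castSucc, Int.toNat_of_nonneg (by linarith [mlow_le (n := n) (w := v.1) (k := i.val) (by omega)])]
    have hstep := hgt_succ v.1 hk
    have hmin := mlow_succ (w := v.1) hk
    have hm1 : mlow v.1 (i.val + 1) ≤ hgt v.1 (i.val + 1) := mlow_le (by omega)
    cases hv : v.1 ⟨i.val, hk⟩
    · rw [hv, if_neg (by simp)] at hstep
      have : ¬ (walkOfWord v (Fin.castSucc i) ≤ walkOfWord v (Fin.succ i)) := by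
        rw [← Nat.cast_le (α := ℤ), e1, e2]
        omega
      rw [decide_eq_false this]
    · rw [hv, if_pos rfl] at hstep
      have : walkOfWord v (Fin.castSucc i) ≤ walkOfWord v (Fin.succ i) := by
        rw [← Nat.cast_le (α := ℤ), e1, e2]
        omega
      rw [decide_eq_true this]
  rw [key w, key w', hx]

/-! ### SYT machinery -/

lemma SYT.ext' {T T' : SYT n} (h1 : T.shape = T'.shape) (h2 : T.entry = T'.entry) :
    T = T' := by
  cases T; cases T'
  simp only at h1 h2
  subst h1; subst h2
  rfl

noncomputable def cellOf (T : SYT n) (m : ℕ) : ℕ × ℕ :=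
  if h : 1 ≤ m ∧ m ≤ n then (T.bij m h.1 h.2).exists.choose else (0, 0)

lemma cellOf_spec (T : SYT n) {m : ℕ} (h1 : 1 ≤ m) (h2 : m ≤ n) :
    cellOf T m ∈ T.shape ∧ T.entry (cellOf T m).1 (cellOf T m).2 = m := by
  rw [cellOf, dif_pos (⟨h1, h2⟩ : 1 ≤ m ∧ m ≤ n)]
  exact (T.bij m h1 h2).exists.choose_spec

lemma cellOf_eq (T : SYT n) {m : ℕ} {c : ℕ × ℕ} (h1 : 1 ≤ m) (h2 : m ≤ n)
    (hc : c ∈ T.shape) (he : T.entry c.1 c.2 = m) : c = cellOf T m := by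
  obtain ⟨spec1, spec2⟩ := cellOf_spec T h1 h2
  exact (T.bij m h1 h2).unique ⟨hc, he⟩ ⟨spec1, spec2⟩

lemma cellOf_val_inj (T : SYT n) {m m' : ℕ} (h1 : 1 ≤ m) (h2 : m ≤ n)
    (h1' : 1 ≤ m') (h2' : m' ≤ n) (h : cellOf T m = cellOf T m') : m = m' := by
  have a := (cellOf_spec T h1 h2).2
  have b := (cellOf_spec T h1' h2').2
  rw [h] at a
  rw [a] at b
  exact b

lemma exists_value (T : SYT n) {c : ℕ × ℕ} (hc : c ∈ T.shape) :
    ∃ m, 1 ≤ m ∧ m ≤ n ∧ cellOf T m = c := by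
  have hcard : T.shape.cells.card ≤ (Finset.Icc 1 n).card := by
    rw [T.card_shape, Nat.card_Icc]
    omega
  have hsurj := Finset.surj_on_of_inj_on_of_card_le
    (s := Finset.Icc 1 n) (t := T.shape.cells)
    (fun m _ => cellOf T m)
    (fun m hm => by
      rw [Finset.mem_Icc] at hm
      exact (YoungDiagram.mem_cells _).mpr (cellOf_spec T hm.1 hm.2).1)
    (fun m m' hm hm' h => by
      rw [Finset.mem_Icc] at hm hm'
      exact cellOf_val_inj T hm.1 hm.2 hm'.1 hm'.2 h)
    hcard
  obtain ⟨m, hm, hmc⟩ := hsurj c ((YoungDiagram.mem_cells _).mpr hc)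
  rw [Finset.mem_Icc] at hm
  exact ⟨m, hm.1, hm.2, hmc.symm⟩

lemma entry_range (T : SYT n) {c : ℕ × ℕ} (hc : c ∈ T.shape) :
    1 ≤ T.entry c.1 c.2 ∧ T.entry c.1 c.2 ≤ n ∧ cellOf T (T.entry c.1 c.2) = c := by
  obtain ⟨m, h1, h2, hcell⟩ := exists_value T hc
  have := (cellOf_spec T h1 h2).2
  rw [hcell] at this
  rw [this]
  exact ⟨h1, h2, hcell⟩

lemma col_lt_two {T : SYT n} (hw : T.width ≤ 2) {i j : ℕ} (h : (i, j) ∈ T.shape) :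
    j < 2 := by
  have h0 : (0, j) ∈ T.shape := T.shape.up_left_mem (Nat.zero_le i) le_rfl h
  rw [YoungDiagram.mem_iff_lt_rowLen] at h0
  exact lt_of_lt_of_le h0 hw

/-! ### SYT to word -/

noncomputable def wordOfSYT (T : SYT n) : Fin n → Bool :=
  fun p => decide ((cellOf T (p.val + 1)).2 = 0)

lemma wordOfSYT_isBallot {T : SYT n} (hw : T.width ≤ 2) : IsBallot (wordOfSYT T) := by
  intro k
  unfold cnt
  classical
  apply Finset.card_le_card_of_injOn
    (fun p => ⟨T.entry (cellOf T (p.val + 1)).1 0 - 1, by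
      rcases Nat.eq_zero_or_pos n with rfl | hn
      · exact absurd p.isLt (by omega)
      · have h1 : 1 ≤ p.val + 1 := by omega
        have h2 : p.val + 1 ≤ n := p.isLt
        have hc := (cellOf_spec T h1 h2).1
        have hcc : ((cellOf T (p.val+1)).1, 0) ∈ T.shape := by
          apply T.shape.up_left_mem le_rfl (Nat.zero_le _)
          rwa [Prod.mk.eta]
        have := (entry_range T hcc).2.1
        simp only at this
        omega⟩)
  · intro p hp
    rw [Finset.mem_coe, Finset.mem_filter] at hp
    rw [Finset.mem_coe, Finset.mem_filter]
    have hpk := hp.2.1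
    have hpw := hp.2.2
    have h1 : 1 ≤ p.val + 1 := by omega
    have h2 : p.val + 1 ≤ n := p.isLt
    obtain ⟨hc, he⟩ := cellOf_spec T h1 h2
    have hcol2 : (cellOf T (p.val+1)).2 < 2 := by
      have : ((cellOf T (p.val+1)).1, (cellOf T (p.val+1)).2) ∈ T.shape := by
        rwa [Prod.mk.eta]
      exact col_lt_two hw this
    have hcol0 : (cellOf T (p.val+1)).2 ≠ 0 := by
      simpa [wordOfSYT] using hpw
    have hcol : (cellOf T (p.val+1)).2 = 1 := by omega
    have hcc : ((cellOf T (p.val+1)).1, 0) ∈ T.shape := by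
      apply T.shape.up_left_mem le_rfl (Nat.zero_le _)
      rwa [Prod.mk.eta]
    -- the entry to the left
    have hlt : T.entry (cellOf T (p.val+1)).1 0 < p.val + 1 := by
      have hc' := hc
      rw [show cellOf T (p.val+1) = ((cellOf T (p.val+1)).1, 1) from Prod.ext rfl hcol] at hc'
      have hstrict := T.row_strict (cellOf T (p.val+1)).1 0 1 (by omega) hc'
      have he1 := he
      rw [hcol] at he1
      omega
    obtain ⟨hv1, hv2, hvc⟩ := entry_range T hcc
    simp only at hv1 hv2 hvc
    refine ⟨Finset.mem_univ _, ?_, ?_⟩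
    · simp only
      omega
    · simp only [wordOfSYT]
      have : T.entry (cellOf T (p.val+1)).1 0 - 1 + 1 = T.entry (cellOf T (p.val+1)).1 0 := by
        omega
      rw [this, hvc]
      simp
  · intro p hp q hq hpq
    rw [Finset.mem_coe, Finset.mem_filter] at hp hq
    have hp1 : 1 ≤ p.val + 1 := by omega
    have hp2 : p.val + 1 ≤ n := p.isLt
    have hq1 : 1 ≤ q.val + 1 := by omega
    have hq2 : q.val + 1 ≤ n := q.isLt
    obtain ⟨hcp, hep⟩ := cellOf_spec T hp1 hp2
    obtain ⟨hcq, heq⟩ := cellOf_spec T hq1 hq2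
    have hcolp : (cellOf T (p.val+1)).2 = 1 := by
      have h2 : (cellOf T (p.val+1)).2 < 2 := col_lt_two hw (by rwa [Prod.mk.eta])
      have h0 : (cellOf T (p.val+1)).2 ≠ 0 := by simpa [wordOfSYT] using hp.2.2
      omega
    have hcolq : (cellOf T (q.val+1)).2 = 1 := by
      have h2 : (cellOf T (q.val+1)).2 < 2 := col_lt_two hw (by rwa [Prod.mk.eta])
      have h0 : (cellOf T (q.val+1)).2 ≠ 0 := by simpa [wordOfSYT] using hq.2.2
      omega
    have hccp : ((cellOf T (p.val+1)).1, 0) ∈ T.shape :=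
      T.shape.up_left_mem le_rfl (Nat.zero_le _) (by rwa [Prod.mk.eta])
    have hccq : ((cellOf T (q.val+1)).1, 0) ∈ T.shape :=
      T.shape.up_left_mem le_rfl (Nat.zero_le _) (by rwa [Prod.mk.eta])
    obtain ⟨hvp1, hvp2, hvpc⟩ := entry_range T hccp
    obtain ⟨hvq1, hvq2, hvqc⟩ := entry_range T hccq
    simp only at hvp1 hvp2 hvpc hvq1 hvq2 hvqc
    simp only [Fin.mk.injEq] at hpq
    have hveq : T.entry (cellOf T (p.val+1)).1 0 = T.entry (cellOf T (q.val+1)).1 0 := by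
      omega
    have hrow : (cellOf T (p.val+1)).1 = (cellOf T (q.val+1)).1 := by
      have h' := hvpc
      rw [hveq, hvqc] at h'
      simpa using congrArg Prod.fst h'.symm
    have hcell : cellOf T (p.val+1) = cellOf T (q.val+1) := by
      apply Prod.ext hrow
      rw [hcolp, hcolq]
    have := cellOf_val_inj T hp1 hp2 hq1 hq2 hcell
    exact Fin.ext (by omega)

lemma row_count {n : ℕ} (T : SYT n) (hw : T.width ≤ 2) {m : ℕ} (h1 : 1 ≤ m) (h2 : m ≤ n) :
    (cellOf T m).1 =
      ((Finset.Icc 1 n).filter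
        (fun m' => m' < m ∧ (cellOf T m').2 = (cellOf T m).2)).card := by
  classical
  obtain ⟨hc, he⟩ := cellOf_spec T h1 h2
  have hSeq : (Finset.Icc 1 n).filter
        (fun m' => m' < m ∧ (cellOf T m').2 = (cellOf T m).2) =
      (Finset.range (cellOf T m).1).image (fun i => T.entry i (cellOf T m).2) := by
    ext m'
    simp only [Finset.mem_filter, Finset.mem_Icc, Finset.mem_image, Finset.mem_range]
    constructor
    · rintro ⟨⟨hm1, hm2⟩, hlt, hcol⟩
      obtain ⟨hc', he'⟩ := cellOf_spec T hm1 hm2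
      refine ⟨(cellOf T m').1, ?_, by rw [← hcol]; exact he'⟩
      -- row of m' is smaller than row of m
      rcases lt_trichotomy (cellOf T m').1 (cellOf T m).1 with h | h | h
      · exact h
      · exfalso
        have : cellOf T m' = cellOf T m := Prod.ext h hcol
        have := cellOf_val_inj T hm1 hm2 h1 h2 this
        omega
      · exfalso
        have hmem : ((cellOf T m').1, (cellOf T m).2) ∈ T.shape := by
          rw [show ((cellOf T m').1, (cellOf T m).2) = cellOf T m' from Prod.ext rfl hcol.symm]
          exact hc'
        have := T.col_strict (cellOf T m).1 (cellOf T m').1 (cellOf T m).2 h hmem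
        rw [he] at this
        have he'' := he'
        rw [hcol] at he''
        omega
    · rintro ⟨i, hi, rfl⟩
      have hmem : (i, (cellOf T m).2) ∈ T.shape :=
        T.shape.up_left_mem (le_of_lt hi) le_rfl (by rwa [Prod.mk.eta])
      obtain ⟨hv1, hv2, hvc⟩ := entry_range T hmem
      simp only at hv1 hv2 hvc
      refine ⟨⟨hv1, hv2⟩, ?_, by rw [hvc]⟩
      have := T.col_strict i (cellOf T m).1 (cellOf T m).2 hi (by rwa [Prod.mk.eta])
      omega
  rw [hSeq, Finset.card_image_of_injOn, Finset.card_range]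
  intro i hi j hj hij
  rw [Finset.mem_coe, Finset.mem_range] at hi hj
  simp only at hij
  by_contra hne
  rcases lt_or_gt_of_ne hne with h | h
  · have hmem : (j, (cellOf T m).2) ∈ T.shape :=
      T.shape.up_left_mem (le_of_lt hj) le_rfl (by rwa [Prod.mk.eta])
    have := T.col_strict i j (cellOf T m).2 h hmem
    omega
  · have hmem : (i, (cellOf T m).2) ∈ T.shape :=
      T.shape.up_left_mem (le_of_lt hi) le_rfl (by rwa [Prod.mk.eta])
    have := T.col_strict j i (cellOf T m).2 h hmem
    omega

lemma sytToWord_injective {n : ℕ} (T T' : SYT n) (hT : T.width ≤ 2) (hT' : T'.width ≤ 2)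
    (h : wordOfSYT T = wordOfSYT T') : T = T' := by
  classical
  -- Step A: columns agree
  have hcolA : ∀ m, 1 ≤ m → m ≤ n → (cellOf T m).2 = (cellOf T' m).2 := by
    intro m h1 h2
    have hp : m - 1 < n := by omega
    have hword := congrFun h ⟨m - 1, hp⟩
    simp only [wordOfSYT] at hword
    have hm : m - 1 + 1 = m := by omega
    rw [hm] at hword
    have c2 : (cellOf T m).2 < 2 :=
      col_lt_two hT (by rw [Prod.mk.eta]; exact (cellOf_spec T h1 h2).1)
    have c2' : (cellOf T' m).2 < 2 :=
      col_lt_two hT' (by rw [Prod.mk.eta]; exact (cellOf_spec T' h1 h2).1)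
    by_cases h0 : (cellOf T m).2 = 0
    · have : (cellOf T' m).2 = 0 := by
        have := hword
        rw [decide_eq_true (by exact h0)] at this
        exact of_decide_eq_true this.symm
      omega
    · have : ¬ (cellOf T' m).2 = 0 := by
        have := hword
        rw [decide_eq_false (by exact h0)] at this
        exact of_decide_eq_false this.symm
      omega
  -- Step B: cells agree
  have hcellB : ∀ m, 1 ≤ m → m ≤ n → cellOf T m = cellOf T' m := by
    intro m h1 h2
    apply Prod.ext
    · rw [row_count T hT h1 h2, row_count T' hT' h1 h2]
      congr 1
      apply Finset.filter_congr
      intro m' hm'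
      rw [Finset.mem_Icc] at hm'
      rw [hcolA m' hm'.1 hm'.2, hcolA m h1 h2]
    · exact hcolA m h1 h2
  -- Step C: shapes agree
  have hshape : T.shape = T'.shape := by
    ext c
    constructor
    · intro hc
      obtain ⟨m, h1, h2, hcell⟩ := exists_value T hc
      rw [← hcell, hcellB m h1 h2]
      exact (cellOf_spec T' h1 h2).1
    · intro hc
      obtain ⟨m, h1, h2, hcell⟩ := exists_value T' hc
      rw [← hcell, ← hcellB m h1 h2]
      exact (cellOf_spec T h1 h2).1
  -- Step D: entries agree
  apply SYT.ext' hshape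
  funext i j
  by_cases hmem : (i, j) ∈ T.shape
  · obtain ⟨m, h1, h2, hcell⟩ := exists_value T hmem
    have e1 : T.entry i j = m := by
      have := (cellOf_spec T h1 h2).2
      rw [hcell] at this
      exact this
    have hcell' : cellOf T' m = (i, j) := by rw [← hcellB m h1 h2]; exact hcell
    have e2 : T'.entry i j = m := by
      have := (cellOf_spec T' h1 h2).2
      rw [hcell'] at this
      exact this
    rw [e1, e2]
  · rw [T.zeros i j hmem, T'.zeros i j (by rwa [← hshape])]

/-! ### word to SYT -/

/-- the `i`-th element of `s` is the `i`-th smallest; number of smaller elements is `i`. -/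
lemma card_below {α : Type*} [LinearOrder α] (s : Finset α) {k : ℕ} (h : s.card = k)
    (i : Fin k) : (s.filter (fun x => x < s.orderEmbOfFin h i)).card = i := by
  classical
  have himg : s.filter (fun x => x < s.orderEmbOfFin h i) =
      (Finset.Iio i).image (s.orderEmbOfFin h) := by
    ext x
    simp only [Finset.mem_filter, Finset.mem_image, Finset.mem_Iio]
    constructor
    · rintro ⟨hxs, hxlt⟩
      have : x ∈ Set.range (s.orderEmbOfFin h) := by
        rw [Finset.range_orderEmbOfFin]
        exact hxs
      obtain ⟨j, rfl⟩ := this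
      exact ⟨j, (OrderEmbedding.lt_iff_lt _).mp hxlt, rfl⟩
    · rintro ⟨j, hj, rfl⟩
      exact ⟨Finset.orderEmbOfFin_mem s h j, (OrderEmbedding.lt_iff_lt _).mpr hj⟩
  rw [himg, Finset.card_image_of_injective _ (s.orderEmbOfFin h).injective, Fin.card_Iio]

section Construction
variable (w : Fin n → Bool)

def tset : Finset (Fin n) := univ.filter (fun i => w i = true)
def fset : Finset (Fin n) := univ.filter (fun i => w i = false)
def na : ℕ := (tset w).card
def nb : ℕ := (fset w).card

noncomputable def posT : Fin (na w) ↪o Fin n := (tset w).orderEmbOfFin rfl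
noncomputable def posF : Fin (nb w) ↪o Fin n := (fset w).orderEmbOfFin rfl

lemma posT_mem (i : Fin (na w)) : w (posT w i) = true := by
  have := Finset.orderEmbOfFin_mem (tset w) rfl i
  simp only [tset, Finset.mem_filter] at this
  exact this.2

lemma posF_mem (i : Fin (nb w)) : w (posF w i) = false := by
  have := Finset.orderEmbOfFin_mem (fset w) rfl i
  simp only [fset, Finset.mem_filter] at this
  exact this.2

lemma na_add_nb : na w + nb w = n := by
  classical
  have h := Finset.card_filter_add_card_filter_not
    (s := (univ : Finset (Fin n))) (p := fun i => w i = true)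
  have h2 : (univ.filter (fun i : Fin n => ¬ (w i = true))) =
      univ.filter (fun i : Fin n => w i = false) := by
    apply Finset.filter_congr; intro i _; simp
  rw [h2] at h
  simpa [na, nb, tset, fset] using h

lemma cnt_n (b : Bool) : cnt w b n = (univ.filter (fun i => w i = b)).card := by
  rw [cnt]
  congr 1
  apply Finset.filter_congr
  intro i _
  simp [i.isLt]

lemma cnt_eq_card (b : Bool) (k : ℕ) :
    cnt w b k = ((univ.filter (fun i => w i = b)).filter (fun i : Fin n => (i : ℕ) < k)).card := by
  rw [cnt, Finset.filter_filter]
  congr 1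
  apply Finset.filter_congr
  intro i _
  rw [and_comm]

lemma nb_le_na (hb : IsBallot w) : nb w ≤ na w := by
  have := hb n
  rw [cnt_n, cnt_n] at this
  exact this

/-- the key order lemma : the `i`-th true precedes the `i`-th false -/
lemma posT_lt_posF (hb : IsBallot w) {i : ℕ} (hia : i < na w) (hib : i < nb w) :
    posT w ⟨i, hia⟩ < posF w ⟨i, hib⟩ := by
  classical
  set p := posF w ⟨i, hib⟩ with hp
  -- #falses ≤ p is i+1
  have hF : ((fset w).filter (fun x => x < p)).card = i := card_below (fset w) rfl ⟨i, hib⟩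
  have hFle : ((fset w).filter (fun x : Fin n => (x : ℕ) < (p : ℕ) + 1)).card = i + 1 := by
    have : (fset w).filter (fun x : Fin n => (x : ℕ) < (p : ℕ) + 1) =
        insert p ((fset w).filter (fun x => x < p)) := by
      ext x
      simp only [Finset.mem_filter, Finset.mem_insert]
      constructor
      · rintro ⟨hxs, hxlt⟩
        rcases eq_or_ne x p with rfl | hne
        · exact Or.inl rfl
        · right
          refine ⟨hxs, ?_⟩
          have : (x : ℕ) ≠ (p : ℕ) := fun hh => hne (Fin.ext hh)
          exact Fin.lt_def.mpr (by omega)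
      · rintro (rfl | ⟨hxs, hxlt⟩)
        · exact ⟨Finset.orderEmbOfFin_mem _ rfl _, by omega⟩
        · exact ⟨hxs, by have := Fin.lt_def.mp hxlt; omega⟩
    rw [this, Finset.card_insert_of_notMem (by simp), hF]
  -- ballot at p+1
  have hbal := hb ((p : ℕ) + 1)
  rw [cnt_eq_card, cnt_eq_card] at hbal
  have hfset : (univ.filter (fun i => w i = false)) = fset w := rfl
  have htset : (univ.filter (fun i => w i = true)) = tset w := rfl
  rw [hfset, htset] at hbal
  -- p is not a true position
  have hpT : p ∉ tset w := by
    rw [tset, Finset.mem_filter]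
    rintro ⟨-, hpt⟩
    rw [posF_mem w ⟨i, hib⟩] at hpt
    exact Bool.false_ne_true hpt
  have hTeq : (tset w).filter (fun x : Fin n => (x : ℕ) < (p : ℕ) + 1) =
      (tset w).filter (fun x => x < p) := by
    apply Finset.filter_congr
    intro x hx
    have hxp : x ≠ p := fun hh => hpT (hh ▸ hx)
    have : (x : ℕ) ≠ (p : ℕ) := fun hh => hxp (Fin.ext hh)
    simp only [eq_iff_iff, Fin.lt_def]
    omega
  rw [hFle, hTeq] at hbal
  -- now conclude
  by_contra hle
  push_neg at hle
  have hsub : (tset w).filter (fun x => x < p) ⊆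
      (tset w).filter (fun x => x < posT w ⟨i, hia⟩) := by
    intro x hx
    rw [Finset.mem_filter] at hx ⊢
    exact ⟨hx.1, lt_of_lt_of_le hx.2 hle⟩
  have hTi : ((tset w).filter (fun x => x < posT w ⟨i, hia⟩)).card = i :=
    card_below (tset w) rfl ⟨i, hia⟩
  have := Finset.card_le_card hsub
  omega

def shapeCells : Finset (ℕ × ℕ) :=
  ((Finset.range (na w)).image (fun i => (i, 0))) ∪ ((Finset.range (nb w)).image (fun i => (i, 1)))

lemma mem_shapeCells {c : ℕ × ℕ} :
    c ∈ shapeCells w ↔ (c.2 = 0 ∧ c.1 < na w) ∨ (c.2 = 1 ∧ c.1 < nb w) := by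
  rw [shapeCells, Finset.mem_union]
  simp only [Finset.mem_image, Finset.mem_range]
  constructor
  · rintro (⟨i, hi, rfl⟩ | ⟨i, hi, rfl⟩)
    · exact Or.inl ⟨rfl, hi⟩
    · exact Or.inr ⟨rfl, hi⟩
  · rintro (⟨h2, h1⟩ | ⟨h2, h1⟩)
    · exact Or.inl ⟨c.1, h1, by rw [← h2, Prod.mk.eta]⟩
    · exact Or.inr ⟨c.1, h1, by rw [← h2, Prod.mk.eta]⟩

def shapeOf (hb : IsBallot w) : YoungDiagram where
  cells := shapeCells w
  isLowerSet := by
    rintro ⟨i, j⟩ ⟨i', j'⟩ ⟨hi, hj⟩ hmem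
    simp only at hi hj
    rw [Finset.mem_coe, mem_shapeCells] at hmem ⊢
    have hba := nb_le_na w hb
    rcases hmem with ⟨h2, h1⟩ | ⟨h2, h1⟩
    · left
      constructor
      · omega
      · simp only
        omega
    · rcases Nat.lt_or_ge j' 1 with hj' | hj'
      · left; constructor <;> simp only <;> omega
      · right; constructor <;> simp only <;> omega

noncomputable def entryOf : ℕ → ℕ → ℕ := fun i j =>
  if j = 0 then (if h : i < na w then (posT w ⟨i, h⟩ : ℕ) + 1 else 0)
  else if j = 1 then (if h : i < nb w then (posF w ⟨i, h⟩ : ℕ) + 1 else 0)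
  else 0

lemma entryOf_col0 {i : ℕ} (h : i < na w) : entryOf w i 0 = (posT w ⟨i, h⟩ : ℕ) + 1 := by
  rw [entryOf, if_pos rfl, dif_pos h]

lemma entryOf_col1 {i : ℕ} (h : i < nb w) : entryOf w i 1 = (posF w ⟨i, h⟩ : ℕ) + 1 := by
  rw [entryOf, if_neg one_ne_zero, if_pos rfl, dif_pos h]

lemma posT_surj {p : Fin n} (hp : p ∈ tset w) : ∃ i, posT w i = p := by
  have : p ∈ Set.range (posT w) := by
    have hr : Set.range (posT w) = (tset w : Set (Fin n)) := Finset.range_orderEmbOfFin (tset w) rfl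
    rw [hr]
    exact hp
  exact this

lemma posF_surj {p : Fin n} (hp : p ∈ fset w) : ∃ i, posF w i = p := by
  have : p ∈ Set.range (posF w) := by
    have hr : Set.range (posF w) = (fset w : Set (Fin n)) := Finset.range_orderEmbOfFin (fset w) rfl
    rw [hr]
    exact hp
  exact this

lemma mem_tset_iff {p : Fin n} : p ∈ tset w ↔ w p = true := by
  simp [tset]

lemma mem_fset_iff {p : Fin n} : p ∈ fset w ↔ w p = false := by
  simp [fset]

noncomputable def sytOfWord (hb : IsBallot w) : SYT n where
  shape := shapeOf w hb
  entry := entryOf w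
  card_shape := by
    show (shapeCells w).card = n
    rw [shapeCells, Finset.card_union_of_disjoint, Finset.card_image_of_injective,
      Finset.card_image_of_injective, Finset.card_range, Finset.card_range, na_add_nb]
    · intro x y hxy
      simpa using hxy
    · intro x y hxy
      simpa using hxy
    · rw [Finset.disjoint_left]
      rintro ⟨c1, c2⟩ hmem hmem'
      simp only [Finset.mem_image, Finset.mem_range] at hmem hmem'
      obtain ⟨x, -, hx⟩ := hmem
      obtain ⟨y, -, hy⟩ := hmem'
      rw [← hy] at hx
      simpa using hx
  row_strict := by
    intro i j1 j2 hj hmem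
    have hmem' := hmem
    rw [show ((i, j2) ∈ shapeOf w hb) ↔ (i, j2) ∈ shapeCells w from Iff.rfl,
      mem_shapeCells] at hmem'
    simp only at hmem'
    rcases hmem' with ⟨h2, h1⟩ | ⟨h2, h1⟩
    · omega
    · -- j2 = 1, j1 = 0
      have hj1 : j1 = 0 := by omega
      rw [hj1, h2]
      have hia : i < na w := lt_of_lt_of_le h1 (nb_le_na w hb)
      rw [entryOf_col0 w hia, entryOf_col1 w h1]
      have := posT_lt_posF w hb hia h1
      have := Fin.lt_def.mp this
      omega
  col_strict := by
    intro i1 i2 j hi hmem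
    have hmem' := hmem
    rw [show ((i2, j) ∈ shapeOf w hb) ↔ (i2, j) ∈ shapeCells w from Iff.rfl,
      mem_shapeCells] at hmem'
    simp only at hmem'
    rcases hmem' with ⟨h2, h1⟩ | ⟨h2, h1⟩
    · have hia : i1 < na w := lt_trans hi h1
      rw [h2, entryOf_col0 w hia, entryOf_col0 w h1]
      have : (⟨i1, hia⟩ : Fin (na w)) < ⟨i2, h1⟩ := Fin.mk_lt_mk.mpr hi
      have := Fin.lt_def.mp ((posT w).lt_iff_lt.mpr this)
      omega
    · have hib : i1 < nb w := lt_trans hi h1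
      rw [h2, entryOf_col1 w hib, entryOf_col1 w h1]
      have : (⟨i1, hib⟩ : Fin (nb w)) < ⟨i2, h1⟩ := Fin.mk_lt_mk.mpr hi
      have := Fin.lt_def.mp ((posF w).lt_iff_lt.mpr this)
      omega
  zeros := by
    intro i j hmem
    rw [show ((i, j) ∈ shapeOf w hb) ↔ (i, j) ∈ shapeCells w from Iff.rfl,
      mem_shapeCells] at hmem
    simp only at hmem
    push_neg at hmem
    rcases Nat.eq_zero_or_pos j with rfl | hj
    · rw [entryOf, if_pos rfl, dif_neg (by have := hmem.1 rfl; omega)]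
    · rcases eq_or_ne j 1 with rfl | hj1
      · rw [entryOf, if_neg one_ne_zero, if_pos rfl, dif_neg (by have := hmem.2 rfl; omega)]
      · rw [entryOf, if_neg (by omega), if_neg hj1]
  bij := by
    intro m h1 h2
    set p : Fin n := ⟨m - 1, by omega⟩ with hp
    have hpm : (p : ℕ) + 1 = m := by
      rw [hp]; simp; omega
    cases hw : w p
    · -- p is a false position
      obtain ⟨i, hi⟩ := posF_surj w ((mem_fset_iff w).mpr hw)
      refine ⟨(i.val, 1), ⟨?_, ?_⟩, ?_⟩
      · rw [show (((i.val : ℕ), 1) ∈ shapeOf w hb) ↔ ((i.val : ℕ), 1) ∈ shapeCells w from Iff.rfl,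
          mem_shapeCells]
        exact Or.inr ⟨rfl, i.isLt⟩
      · show entryOf w i.val 1 = m
        rw [entryOf_col1 w i.isLt]
        have : (⟨i.val, i.isLt⟩ : Fin (nb w)) = i := rfl
        rw [this, hi, hpm]
      · rintro ⟨c1, c2⟩ ⟨hmem, hent⟩
        rw [show (((c1 : ℕ), c2) ∈ shapeOf w hb) ↔ ((c1 : ℕ), c2) ∈ shapeCells w from Iff.rfl,
          mem_shapeCells] at hmem
        simp only at hmem hent
        rcases hmem with ⟨hc2, hc1⟩ | ⟨hc2, hc1⟩
        · exfalso
          rw [hc2, entryOf_col0 w hc1] at hent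
          have hposT : posT w ⟨c1, hc1⟩ = p := by
            apply Fin.ext
            omega
          have := posT_mem w ⟨c1, hc1⟩
          rw [hposT, hw] at this
          exact Bool.noConfusion this
        · rw [hc2, entryOf_col1 w hc1] at hent
          have hposF : posF w ⟨c1, hc1⟩ = p := by
            apply Fin.ext
            omega
          have : (⟨c1, hc1⟩ : Fin (nb w)) = i := by
            apply (posF w).injective
            rw [hposF, hi]
          have hc1i : c1 = i.val := congrArg Fin.val this
          rw [hc2, hc1i]
    · -- p is a true position
      obtain ⟨i, hi⟩ := posT_surj w ((mem_tset_iff w).mpr hw)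
      refine ⟨(i.val, 0), ⟨?_, ?_⟩, ?_⟩
      · rw [show (((i.val : ℕ), 0) ∈ shapeOf w hb) ↔ ((i.val : ℕ), 0) ∈ shapeCells w from Iff.rfl,
          mem_shapeCells]
        exact Or.inl ⟨rfl, i.isLt⟩
      · show entryOf w i.val 0 = m
        rw [entryOf_col0 w i.isLt]
        have : (⟨i.val, i.isLt⟩ : Fin (na w)) = i := rfl
        rw [this, hi, hpm]
      · rintro ⟨c1, c2⟩ ⟨hmem, hent⟩
        rw [show (((c1 : ℕ), c2) ∈ shapeOf w hb) ↔ ((c1 : ℕ), c2) ∈ shapeCells w from Iff.rfl,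
          mem_shapeCells] at hmem
        simp only at hmem hent
        rcases hmem with ⟨hc2, hc1⟩ | ⟨hc2, hc1⟩
        · rw [hc2, entryOf_col0 w hc1] at hent
          have hposT : posT w ⟨c1, hc1⟩ = p := by
            apply Fin.ext
            omega
          have : (⟨c1, hc1⟩ : Fin (na w)) = i := by
            apply (posT w).injective
            rw [hposT, hi]
          have hc1i : c1 = i.val := congrArg Fin.val this
          rw [hc2, hc1i]
        · exfalso
          rw [hc2, entryOf_col1 w hc1] at hent
          have hposF : posF w ⟨c1, hc1⟩ = p := by
            apply Fin.ext
            omega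
          have := posF_mem w ⟨c1, hc1⟩
          rw [hposF, hw] at this
          exact Bool.noConfusion this

lemma sytOfWord_width (hb : IsBallot w) : (sytOfWord w hb).width ≤ 2 := by
  by_contra h
  push_neg at h
  have : (0, 2) ∈ (sytOfWord w hb).shape := by
    rw [YoungDiagram.mem_iff_lt_rowLen]
    exact h
  rw [show ((0, 2) ∈ (sytOfWord w hb).shape) ↔ (0, 2) ∈ shapeCells w from Iff.rfl,
    mem_shapeCells] at this
  simp at this

lemma sytOfWord_injective {w' : Fin n → Bool} (hb : IsBallot w) (hb' : IsBallot w')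
    (h : sytOfWord w hb = sytOfWord w' hb') : w = w' := by
  have hshape : shapeCells w = shapeCells w' := congrArg (fun T : SYT n => T.shape.cells) h
  have hent : entryOf w = entryOf w' := congrArg SYT.entry h
  have hna : na w = na w' := by
    have h2 : ∀ i, (i < na w ↔ i < na w') := by
      intro i
      have h1 : ((i, 0) ∈ shapeCells w ↔ (i, 0) ∈ shapeCells w') := by rw [hshape]
      rw [mem_shapeCells, mem_shapeCells] at h1
      simpa using h1
    have ha := h2 (na w)
    have hb2 := h2 (na w')
    omega
  have hnb : nb w = nb w' := by
    have := na_add_nb w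
    have := na_add_nb w'
    omega
  have hposT : ∀ i (hi : i < na w) (hi' : i < na w'),
      (posT w ⟨i, hi⟩ : ℕ) = (posT w' ⟨i, hi'⟩ : ℕ) := by
    intro i hi hi'
    have e1 := entryOf_col0 w hi
    have e2 := entryOf_col0 w' hi'
    rw [hent] at e1
    omega
  have hposF : ∀ i (hi : i < nb w) (hi' : i < nb w'),
      (posF w ⟨i, hi⟩ : ℕ) = (posF w' ⟨i, hi'⟩ : ℕ) := by
    intro i hi hi'
    have e1 := entryOf_col1 w hi
    have e2 := entryOf_col1 w' hi'
    rw [hent] at e1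
    omega
  funext p
  cases hw : w p
  · obtain ⟨i, hi⟩ := posF_surj w ((mem_fset_iff w).mpr hw)
    have hi' : i.val < nb w' := by rw [← hnb]; exact i.isLt
    have hvals := hposF i.val i.isLt hi'
    have heta : (⟨i.val, i.isLt⟩ : Fin (nb w)) = i := rfl
    rw [heta, hi] at hvals
    have hp' : posF w' ⟨i.val, hi'⟩ = p := Fin.ext hvals.symm
    have : w' p = false := by rw [← hp']; exact posF_mem w' _
    rw [this]
  · obtain ⟨i, hi⟩ := posT_surj w ((mem_tset_iff w).mpr hw)
    have hi' : i.val < na w' := by rw [← hna]; exact i.isLt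
    have hvals := hposT i.val i.isLt hi'
    have heta : (⟨i.val, i.isLt⟩ : Fin (na w)) = i := rfl
    rw [heta, hi] at hvals
    have hp' : posT w' ⟨i.val, hi'⟩ = p := Fin.ext hvals.symm
    have : w' p = true := by rw [← hp']; exact posT_mem w' _
    rw [this]

end Construction

end SYTWalks

/-- The number of standard Young tableaux with `n` cells and at most `2` columns
equals the number of lattice walks of length `n` on the nonnegative integers which
start and end at `0`, with steps `+1`, `-1`, `0`, where a `0` step may only be
used at position `0`. -/
theorem syt_two_cols_eq_walks (n : ℕ) :
    Nat.card {T : SYT n // T.width ≤ 2} =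
      Nat.card {x : Fin (n + 1) → ℕ //
        x 0 = 0 ∧ x (Fin.last n) = 0 ∧
        ∀ i : Fin n,
          ((x i.succ : ℤ) - (x i.castSucc : ℤ) = 1 ∨
            (x i.succ : ℤ) - (x i.castSucc : ℤ) = -1 ∨
            (x i.succ = x i.castSucc ∧ x i.castSucc = 0))} := by
  classical
  have hball : ∀ T : {T : SYT n // T.width ≤ 2}, SYTWalks.IsBallot (SYTWalks.wordOfSYT T.1) :=
    fun T => SYTWalks.wordOfSYT_isBallot T.2
  let f : {T : SYT n // T.width ≤ 2} → SYTWalks.BW n :=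
    fun T => ⟨SYTWalks.wordOfSYT T.1, hball T⟩
  have hf : Function.Injective f := by
    intro T T' h
    exact Subtype.ext (SYTWalks.sytToWord_injective T.1 T'.1 T.2 T'.2
      (congrArg Subtype.val h))
  let g : SYTWalks.BW n → {T : SYT n // T.width ≤ 2} :=
    fun w => ⟨SYTWalks.sytOfWord w.1 w.2, SYTWalks.sytOfWord_width w.1 w.2⟩
  have hg : Function.Injective g := by
    intro w w' h
    exact Subtype.ext (SYTWalks.sytOfWord_injective w.1 w.2 w'.2 (congrArg Subtype.val h))
  haveI : Finite {T : SYT n // T.width ≤ 2} := Finite.of_injective f hf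
  haveI : Finite (SYTWalks.Walk n) :=
    Finite.of_injective _ (SYTWalks.walkToWord_injective (n := n))
  have h1 : Nat.card {T : SYT n // T.width ≤ 2} = Nat.card (SYTWalks.BW n) :=
    le_antisymm (Nat.card_le_card_of_injective f hf) (Nat.card_le_card_of_injective g hg)
  have h2 : Nat.card (SYTWalks.BW n) = Nat.card (SYTWalks.Walk n) :=
    le_antisymm (Nat.card_le_card_of_injective _ (SYTWalks.wordToWalk_injective (n := n)))
      (Nat.card_le_card_of_injective _ (SYTWalks.walkToWord_injective (n := n)))
  exact h1.trans h2
end
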